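/- arXiv:2009.06162 — 7 statements merged into one kernel-verified Lean document; each statement's English description precedes it below -/
import Mathlib

section
/- Let x_1, ..., x_k be independent variables and let e_1, ..., e_k denote the elementary symmetric polynomials in the x_i's of degrees 1, 2, ..., k respectively. Then in the polynomial ring K[x_1, ..., x_k] over a field K of characteristic 0, for each positive integer n one has the identity: the sum over all tuples (r_1, ..., r_k) of non-negative integers with r_1 + r_2 + ... + r_k = n of x_1^{r_1} x_2^{r_2} ··· x_k^{r_k} equals the sum over all tuples of non-negative integers (i_2, ..., i_k) with 2i_2 + 3i_3 + ... + k·i_k ≤ n of c(i_2, ..., i_k, n) · e_1^{n-2i_2-3i_3-...-k·i_k} · (-e_2)^{i_2} · e_3^{i_3} ··· ((-1)^{k-1} e_k)^{i_k}, where c(i_2, ..., i_k, n) = (n - i_2 - 2i_3 - ... - (k-1)i_k)! / (i_2! ··· i_k! · (n - 2i_2 - 3i_3 - ... - k·i_k)!). -/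
open MvPolynomial Finset


section PS
variable (K : Type*) [CommRing K] (k : ℕ)

private noncomputable def Qs : PowerSeries (MvPolynomial (Fin k) K) :=
  ∑ j ∈ range k, (-1) ^ j * PowerSeries.C (esymm (Fin k) K (j + 1)) * PowerSeries.X ^ (j + 1)

private lemma prod_one_sub :
    (∏ i : Fin k, (1 - PowerSeries.C (R := MvPolynomial (Fin k) K) (MvPolynomial.X i) * PowerSeries.X)) =
    1 - Qs K k := by
  have h1 : ∀ i : Fin k,
      (1 - PowerSeries.C (R := MvPolynomial (Fin k) K) (MvPolynomial.X i) * PowerSeries.X) =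
      (-(PowerSeries.C (R := MvPolynomial (Fin k) K) (MvPolynomial.X i) * PowerSeries.X)) + 1 := by
    intro i; ring
  simp_rw [h1]
  rw [Finset.prod_add]
  have h2 : ∀ t : Finset (Fin k),
      (∏ i ∈ t, -(PowerSeries.C (R := MvPolynomial (Fin k) K) (MvPolynomial.X i) * PowerSeries.X)) *
        ∏ i ∈ univ \ t, (1 : PowerSeries (MvPolynomial (Fin k) K)) =
      (-1) ^ (#t) * PowerSeries.C (∏ i ∈ t, MvPolynomial.X i) * PowerSeries.X ^ (#t) := by
    intro t
    rw [Finset.prod_const_one, mul_one]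
    have : ∀ i : Fin k, -(PowerSeries.C (R := MvPolynomial (Fin k) K) (MvPolynomial.X i) *
        PowerSeries.X) = (-1) * (PowerSeries.C (R := MvPolynomial (Fin k) K) (MvPolynomial.X i) *
        PowerSeries.X) := fun i => by ring
    rw [Finset.prod_congr rfl fun i _ => this i, Finset.prod_mul_distrib, Finset.prod_const,
      Finset.prod_mul_distrib, map_prod, Finset.prod_const]
    ring
  simp_rw [h2]
  -- group by cardinality
  rw [← Finset.sum_fiberwise_of_maps_to (g := fun t : Finset (Fin k) => #t)
    (t := range (k + 1)) (fun t _ => by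
      rw [mem_range, Nat.lt_succ_iff]; simpa using Finset.card_le_card (Finset.subset_univ t))]
  have h3 : ∀ j ∈ range (k + 1),
      (∑ t ∈ (univ : Finset (Fin k)).powerset with #t = j,
        (-1) ^ (#t) * PowerSeries.C (R := MvPolynomial (Fin k) K) (∏ i ∈ t, MvPolynomial.X i) *
          PowerSeries.X ^ (#t)) =
      (-1) ^ j * PowerSeries.C (esymm (Fin k) K j) * PowerSeries.X ^ j := by
    intro j _
    rw [esymm, map_sum, Finset.mul_sum, Finset.sum_mul, ← Finset.powersetCard_eq_filter]
    refine Finset.sum_congr rfl fun t ht => ?_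
    rw [(Finset.mem_powersetCard.1 ht).2]
  rw [Finset.sum_congr rfl h3, Finset.sum_range_succ']
  simp only [pow_zero, one_mul, esymm_zero, map_one, mul_one]
  rw [Qs]
  have : ∀ j ∈ range k, (-1 : PowerSeries (MvPolynomial (Fin k) K)) ^ (j + 1) *
      PowerSeries.C (esymm (Fin k) K (j + 1)) * PowerSeries.X ^ (j + 1) =
      -((-1) ^ j * PowerSeries.C (esymm (Fin k) K (j + 1)) * PowerSeries.X ^ (j + 1)) := by
    intro j _; ring
  rw [Finset.sum_congr rfl this, Finset.sum_neg_distrib]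
  ring

private lemma geom_unit (i : Fin k) :
    (1 - PowerSeries.C (R := MvPolynomial (Fin k) K) (MvPolynomial.X i) * PowerSeries.X) *
      PowerSeries.mk (fun m => (MvPolynomial.X i : MvPolynomial (Fin k) K) ^ m) = 1 := by
  have hrw : (1 - PowerSeries.C (R := MvPolynomial (Fin k) K) (MvPolynomial.X i) * PowerSeries.X) *
      PowerSeries.mk (fun m => (MvPolynomial.X i : MvPolynomial (Fin k) K) ^ m) =
      PowerSeries.mk (fun m => (MvPolynomial.X i : MvPolynomial (Fin k) K) ^ m) -
      PowerSeries.C (R := MvPolynomial (Fin k) K) (MvPolynomial.X i) *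
        (PowerSeries.X * PowerSeries.mk (fun m => (MvPolynomial.X i : MvPolynomial (Fin k) K) ^ m)) := by
    ring
  rw [hrw]
  ext n
  cases n with
  | zero => simp
  | succ m =>
    simp [PowerSeries.coeff_succ_X_mul, PowerSeries.coeff_C_mul, PowerSeries.coeff_one, pow_succ,
      mul_comm]

private lemma prod_geom :
    (∏ i : Fin k, PowerSeries.mk (fun m => (MvPolynomial.X i : MvPolynomial (Fin k) K) ^ m)) =
    PowerSeries.mk (fun m => ∑ r ∈ piAntidiag (univ : Finset (Fin k)) m,
      ∏ i, (MvPolynomial.X i : MvPolynomial (Fin k) K) ^ r i) := by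
  refine PowerSeries.ext fun n => ?_
  rw [PowerSeries.coeff_prod, PowerSeries.coeff_mk]
  refine Finset.sum_nbij' (fun l => (l : Fin k → ℕ)) (fun r => Finsupp.equivFunOnFinite.symm r)
    ?_ ?_ ?_ ?_ ?_
  · intro l hl
    simp only [mem_finsuppAntidiag] at hl
    simp [mem_piAntidiag, hl.1]
  · intro r hr
    simp only [mem_piAntidiag] at hr
    simp only [mem_finsuppAntidiag]
    constructor
    · rw [← hr.1]; exact Finset.sum_congr rfl (fun i _ => rfl)
    · exact Finset.subset_univ _
  · intro l _; exact Finsupp.equivFunOnFinite.symm_apply_apply l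
  · intro r _; rfl
  · intro l _
    exact Finset.prod_congr rfl (fun i _ => by rw [PowerSeries.coeff_mk])

private lemma coeff_G (n : ℕ) :
    (∑ r ∈ piAntidiag (univ : Finset (Fin k)) n,
      ∏ i, (MvPolynomial.X i : MvPolynomial (Fin k) K) ^ r i) =
    ∑ m ∈ range (n + 1), PowerSeries.coeff n ((Qs K k) ^ m) := by
  set G : PowerSeries (MvPolynomial (Fin k) K) :=
    PowerSeries.mk (fun m => ∑ r ∈ piAntidiag (univ : Finset (Fin k)) m,
      ∏ i, (MvPolynomial.X i : MvPolynomial (Fin k) K) ^ r i) with hG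
  have hPG : (1 - Qs K k) * G = 1 := by
    rw [← prod_one_sub, hG, ← prod_geom, ← Finset.prod_mul_distrib]
    rw [Finset.prod_congr rfl fun i _ => geom_unit K k i, Finset.prod_const_one]
  have hgeom : (1 - Qs K k) * (∑ m ∈ range (n + 1), (Qs K k) ^ m) = 1 - (Qs K k) ^ (n + 1) := by
    have := geom_sum_mul (Qs K k) (n + 1)
    linear_combination -this
  have hGdecomp : G = (∑ m ∈ range (n + 1), (Qs K k) ^ m) + G * (Qs K k) ^ (n + 1) := by
    calc G = G * ((1 - Qs K k) * (∑ m ∈ range (n + 1), (Qs K k) ^ m) + (Qs K k) ^ (n + 1)) := by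
            rw [hgeom]; ring
    _ = (1 - Qs K k) * G * (∑ m ∈ range (n + 1), (Qs K k) ^ m) + G * (Qs K k) ^ (n + 1) := by ring
    _ = _ := by rw [hPG]; ring
  have hXdvd : (PowerSeries.X : PowerSeries (MvPolynomial (Fin k) K)) ∣ Qs K k := by
    rw [Qs]
    refine Finset.dvd_sum fun j _ => ?_
    exact Dvd.dvd.mul_left (dvd_pow_self _ (Nat.succ_ne_zero j)) _
  have hzero : PowerSeries.coeff n (G * (Qs K k) ^ (n + 1)) = 0 := by
    have : (PowerSeries.X : PowerSeries (MvPolynomial (Fin k) K)) ^ (n + 1) ∣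
        G * (Qs K k) ^ (n + 1) := Dvd.dvd.mul_left (pow_dvd_pow_of_dvd hXdvd _) _
    exact PowerSeries.X_pow_dvd_iff.1 this n (Nat.lt_succ_self n)
  have := congrArg (PowerSeries.coeff n) hGdecomp
  rw [map_add, hzero, add_zero, map_sum] at this
  simpa [hG] using this

private lemma coeff_Q_pow (n m : ℕ) :
    PowerSeries.coeff n ((Qs K k) ^ m) =
    ∑ d ∈ (piAntidiag (range k) m).filter
        (fun d => ∑ j ∈ range k, (j + 1) * d j = n),
      (Nat.multinomial (range k) d : MvPolynomial (Fin k) K) *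
        ∏ j ∈ range k, ((-1) ^ j * esymm (Fin k) K (j + 1)) ^ d j := by
  rw [Qs, Finset.sum_pow_eq_sum_piAntidiag, map_sum, Finset.sum_filter]
  refine Finset.sum_congr rfl fun d hd => ?_
  have hterm : (Nat.multinomial (range k) d : PowerSeries (MvPolynomial (Fin k) K)) *
      ∏ j ∈ range k, ((-1) ^ j * PowerSeries.C (esymm (Fin k) K (j + 1)) *
        PowerSeries.X ^ (j + 1)) ^ d j =
      PowerSeries.C ((Nat.multinomial (range k) d : MvPolynomial (Fin k) K) *
        ∏ j ∈ range k, ((-1) ^ j * esymm (Fin k) K (j + 1)) ^ d j) *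
      PowerSeries.X ^ (∑ j ∈ range k, (j + 1) * d j) := by
    have hfac : ∀ j ∈ range k, ((-1) ^ j * PowerSeries.C (R := MvPolynomial (Fin k) K)
        (esymm (Fin k) K (j + 1)) * PowerSeries.X ^ (j + 1)) ^ d j =
        PowerSeries.C (((-1) ^ j * esymm (Fin k) K (j + 1)) ^ d j) *
          PowerSeries.X ^ ((j + 1) * d j) := by
      intro j _
      rw [mul_pow, ← pow_mul, map_pow, map_mul, map_pow, map_neg, map_one]
    rw [Finset.prod_congr rfl hfac, Finset.prod_mul_distrib, Finset.prod_pow_eq_pow_sum,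
      map_mul, map_natCast, map_prod]
    ring
  rw [hterm, PowerSeries.coeff_C_mul_X_pow]
  by_cases h : ∑ j ∈ range k, (j + 1) * d j = n
  · rw [if_pos h, if_pos h.symm]
  · rw [if_neg h, if_neg fun hh => h hh.symm]

end PS


private lemma sum_range_succ_fin {M : Type*} [AddCommMonoid M] (k1 : ℕ) (f : ℕ → M) :
    ∑ t ∈ range (k1 + 1), f t = f 0 + ∑ j : Fin k1, f ((j : ℕ) + 1) := by
  rw [Finset.sum_range_succ', Fin.sum_univ_eq_sum_range (fun t => f (t + 1)) k1, add_comm]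

private lemma prod_range_succ_fin {M : Type*} [CommMonoid M] (k1 : ℕ) (f : ℕ → M) :
    ∏ t ∈ range (k1 + 1), f t = f 0 * ∏ j : Fin k1, f ((j : ℕ) + 1) := by
  rw [Finset.prod_range_succ', Fin.prod_univ_eq_prod_range (fun t => f (t + 1)) k1, mul_comm]

private def toD (k1 n : ℕ) (v : Fin k1 → Fin (n + 1)) : ℕ → ℕ
  | 0 => n - ∑ j : Fin k1, ((j : ℕ) + 2) * (v j : ℕ)
  | (t + 1) => if h : t < k1 then (v ⟨t, h⟩ : ℕ) else 0

private lemma toD_succ (k1 n : ℕ) (v : Fin k1 → Fin (n + 1)) (j : Fin k1) :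
    toD k1 n v ((j : ℕ) + 1) = (v j : ℕ) := by
  simp [toD]

private lemma toD_zero (k1 n : ℕ) (v : Fin k1 → Fin (n + 1)) :
    toD k1 n v 0 = n - ∑ j : Fin k1, ((j : ℕ) + 2) * (v j : ℕ) := rfl

private lemma comb (K : Type*) [CommRing K] (k1 n m : ℕ) :
    ∑ d ∈ (piAntidiag (range (k1 + 1)) m).filter
        (fun d => ∑ j ∈ range (k1 + 1), (j + 1) * d j = n),
      (Nat.multinomial (range (k1 + 1)) d : MvPolynomial (Fin (k1 + 1)) K) *
        ∏ j ∈ range (k1 + 1), ((-1) ^ j * esymm (Fin (k1 + 1)) K (j + 1)) ^ d j =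
    ∑ v ∈ (Finset.univ.filter
        (fun v : Fin k1 → Fin (n + 1) =>
          ∑ j : Fin k1, ((j : ℕ) + 2) * (v j : ℕ) ≤ n)).filter
        (fun v => n - ∑ j : Fin k1, ((j : ℕ) + 1) * (v j : ℕ) = m),
      (((n - ∑ j : Fin k1, ((j : ℕ) + 1) * (v j : ℕ)).factorial /
          ((∏ j : Fin k1, ((v j : ℕ)).factorial) *
            (n - ∑ j : Fin k1, ((j : ℕ) + 2) * (v j : ℕ)).factorial) : ℕ) :
          MvPolynomial (Fin (k1 + 1)) K) *
        esymm (Fin (k1 + 1)) K 1 ^ (n - ∑ j : Fin k1, ((j : ℕ) + 2) * (v j : ℕ)) *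
        ∏ j : Fin k1,
          ((-1) ^ ((j : ℕ) + 1) * esymm (Fin (k1 + 1)) K ((j : ℕ) + 2)) ^ (v j : ℕ) := by
  have hS2 : ∀ v : Fin k1 → Fin (n + 1),
      ∑ j : Fin k1, ((j : ℕ) + 2) * (v j : ℕ) =
      (∑ j : Fin k1, ((j : ℕ) + 1) * (v j : ℕ)) + ∑ j : Fin k1, (v j : ℕ) := by
    intro v; rw [← Finset.sum_add_distrib]
    exact Finset.sum_congr rfl fun j _ => by ring
  have hconv : ∀ w : ℕ → ℕ, ∑ j : Fin k1, ((j : ℕ) + 1 + 1) * w ((j : ℕ) + 1) =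
      ∑ j : Fin k1, ((j : ℕ) + 2) * w ((j : ℕ) + 1) :=
    fun w => Finset.sum_congr rfl fun j _ => by ring
  have hsplitD : ∀ w : ℕ → ℕ, ∑ j : Fin k1, ((j : ℕ) + 2) * w ((j : ℕ) + 1) =
      (∑ j : Fin k1, ((j : ℕ) + 1) * w ((j : ℕ) + 1)) + ∑ j : Fin k1, w ((j : ℕ) + 1) := by
    intro w; rw [← Finset.sum_add_distrib]
    exact Finset.sum_congr rfl fun j _ => by ring
  -- facts about elements of the source
  have hsrc : ∀ d ∈ (piAntidiag (range (k1 + 1)) m).filter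
      (fun d => ∑ j ∈ range (k1 + 1), (j + 1) * d j = n),
      (d 0 + ∑ j : Fin k1, d ((j : ℕ) + 1) = m) ∧ (∀ t, d t ≠ 0 → t ∈ range (k1 + 1)) ∧
      (d 0 + ∑ j : Fin k1, ((j : ℕ) + 2) * d ((j : ℕ) + 1) = n) ∧
      (∀ j : Fin k1, d ((j : ℕ) + 1) ≤ n) := by
    intro d hd
    rw [Finset.mem_filter, mem_piAntidiag] at hd
    obtain ⟨⟨hd1, hd2⟩, hd3⟩ := hd
    rw [sum_range_succ_fin] at hd1
    rw [sum_range_succ_fin, hconv (fun t => d t)] at hd3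
    simp only [zero_add, one_mul] at hd3
    refine ⟨hd1, hd2, hd3, fun j => ?_⟩
    have h1 : ((j : ℕ) + 2) * d ((j : ℕ) + 1) ≤
        ∑ i : Fin k1, ((i : ℕ) + 2) * d ((i : ℕ) + 1) :=
      Finset.single_le_sum (f := fun i : Fin k1 => ((i : ℕ) + 2) * d ((i : ℕ) + 1))
        (fun i _ => Nat.zero_le _) (Finset.mem_univ j)
    have h2 : d ((j : ℕ) + 1) ≤ ((j : ℕ) + 2) * d ((j : ℕ) + 1) :=
      Nat.le_mul_of_pos_left _ (by omega)
    omega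
  refine Finset.sum_nbij'
    (i := fun d => fun j : Fin k1 => (⟨min (d ((j : ℕ) + 1)) n, by omega⟩ : Fin (n + 1)))
    (j := fun v => toD k1 n v) ?_ ?_ ?_ ?_ ?_
  · -- maps to
    intro d hd
    obtain ⟨hd1, hd2, hd3, hd4⟩ := hsrc d hd
    have hmin : ∀ j : Fin k1, min (d ((j : ℕ) + 1)) n = d ((j : ℕ) + 1) :=
      fun j => min_eq_left (hd4 j)
    have := hsplitD d
    simp only [Finset.mem_filter, Finset.mem_univ, true_and, Fin.val_mk, hmin]
    constructor
    · omega
    · omega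
  · -- inverse maps to
    intro v hv
    simp only [Finset.mem_filter, Finset.mem_univ, true_and] at hv
    obtain ⟨hv1, hv2⟩ := hv
    rw [Finset.mem_filter, mem_piAntidiag]
    have hsum : ∑ t ∈ range (k1 + 1), toD k1 n v t =
        (n - ∑ j : Fin k1, ((j : ℕ) + 2) * (v j : ℕ)) + ∑ j : Fin k1, (v j : ℕ) := by
      rw [sum_range_succ_fin, Finset.sum_congr rfl (fun j _ => toD_succ k1 n v j), toD_zero]
    have hwsum : ∑ t ∈ range (k1 + 1), (t + 1) * toD k1 n v t =
        (n - ∑ j : Fin k1, ((j : ℕ) + 2) * (v j : ℕ)) +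
          ∑ j : Fin k1, ((j : ℕ) + 2) * (v j : ℕ) := by
      rw [sum_range_succ_fin]
      have hh : ∀ j : Fin k1, ((j : ℕ) + 1 + 1) * toD k1 n v ((j : ℕ) + 1) =
          ((j : ℕ) + 2) * (v j : ℕ) := by
        intro j; rw [toD_succ]
      rw [Finset.sum_congr rfl fun j _ => hh j, toD_zero]
      omega
    have := hS2 v
    refine ⟨⟨?_, ?_⟩, ?_⟩
    · rw [hsum]; omega
    · intro t ht
      rw [mem_range]
      by_contra hcon
      apply ht
      cases t with
      | zero => exact absurd (by omega) hcon
      | succ s => simp only [toD]; rw [dif_neg (by omega)]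
    · rw [hwsum]; omega
  · -- left inverse
    intro d hd
    obtain ⟨hd1, hd2, hd3, hd4⟩ := hsrc d hd
    have hmin : ∀ j : Fin k1, min (d ((j : ℕ) + 1)) n = d ((j : ℕ) + 1) :=
      fun j => min_eq_left (hd4 j)
    funext t
    cases t with
    | zero =>
      simp only [toD_zero, Fin.val_mk, hmin]
      omega
    | succ s =>
      by_cases hs : s < k1
      · simp only [toD, dif_pos hs, Fin.val_mk]
        exact min_eq_left (hd4 ⟨s, hs⟩)
      · simp only [toD]
        rw [dif_neg hs]
        by_contra hcon
        have := hd2 (s + 1) (fun h => hcon h.symm)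
        rw [mem_range] at this; omega
  · -- right inverse
    intro v hv
    funext j
    apply Fin.ext
    simp only [Fin.val_mk, toD_succ]
    exact min_eq_left (Nat.lt_succ_iff.1 (v j).isLt)
  · -- terms agree
    intro d hd
    obtain ⟨hd1, hd2, hd3, hd4⟩ := hsrc d hd
    have hmin : ∀ j : Fin k1, min (d ((j : ℕ) + 1)) n = d ((j : ℕ) + 1) :=
      fun j => min_eq_left (hd4 j)
    have hsplit := hsplitD d
    simp only [Fin.val_mk, hmin]
    have hnum : n - ∑ j : Fin k1, ((j : ℕ) + 1) * d ((j : ℕ) + 1) =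
        d 0 + ∑ j : Fin k1, d ((j : ℕ) + 1) := by omega
    have hd0 : n - ∑ j : Fin k1, ((j : ℕ) + 2) * d ((j : ℕ) + 1) = d 0 := by omega
    rw [hnum, hd0]
    have hmult : Nat.multinomial (range (k1 + 1)) d =
        (d 0 + ∑ j : Fin k1, d ((j : ℕ) + 1)).factorial /
          ((∏ j : Fin k1, (d ((j : ℕ) + 1)).factorial) * (d 0).factorial) := by
      rw [Nat.multinomial, sum_range_succ_fin, prod_range_succ_fin, mul_comm]
    rw [hmult]
    have hprod : ∏ j ∈ range (k1 + 1),
        ((-1 : MvPolynomial (Fin (k1 + 1)) K) ^ j * esymm (Fin (k1 + 1)) K (j + 1)) ^ d j =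
        esymm (Fin (k1 + 1)) K 1 ^ d 0 *
          ∏ j : Fin k1, ((-1) ^ ((j : ℕ) + 1) * esymm (Fin (k1 + 1)) K ((j : ℕ) + 2)) ^
            d ((j : ℕ) + 1) := by
      rw [prod_range_succ_fin]
      congr 1
      · rw [pow_zero, one_mul]
    rw [hprod]
    ring

/-- **Sury's identity (Theorem 1 of Sury).**
In `K[x_1, …, x_k]` with `K` a field of characteristic `0`, the sum of all monomials
`x_1^{r_1} ⋯ x_k^{r_k}` of total degree `n` equals the sum over all tuples of
non-negative integers `(i_2, …, i_k)` with `2i_2 + 3i_3 + ⋯ + k·i_k ≤ n` of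
`c(i_2, …, i_k, n) · e_1^{n - 2i_2 - ⋯ - k·i_k} · (-e_2)^{i_2} · e_3^{i_3} ⋯ ((-1)^{k-1} e_k)^{i_k}`,
where `c(i_2, …, i_k, n) = (n - i_2 - 2i_3 - ⋯ - (k-1)i_k)! / (i_2! ⋯ i_k! · (n - 2i_2 - ⋯ - k·i_k)!)`.
Here the tuple `(i_2, …, i_k)` is encoded as `v : Fin (k-1) → Fin (n+1)`
(with `i_{j+2} = v j`; any `i_t` satisfying the constraint is at most `n`). -/
theorem sury_identity (K : Type*) [Field K] [CharZero K] (k n : ℕ) (hk : 1 ≤ k) (hn : 1 ≤ n) :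
    ∑ r ∈ Finset.Nat.antidiagonalTuple k n, ∏ i, (X i : MvPolynomial (Fin k) K) ^ r i =
    ∑ v ∈ Finset.univ.filter
        (fun v : Fin (k - 1) → Fin (n + 1) =>
          ∑ j : Fin (k - 1), ((j : ℕ) + 2) * (v j : ℕ) ≤ n),
      (((n - ∑ j : Fin (k - 1), ((j : ℕ) + 1) * (v j : ℕ)).factorial /
          ((∏ j : Fin (k - 1), ((v j : ℕ)).factorial) *
            (n - ∑ j : Fin (k - 1), ((j : ℕ) + 2) * (v j : ℕ)).factorial) : ℕ) :
          MvPolynomial (Fin k) K) *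
        esymm (Fin k) K 1 ^ (n - ∑ j : Fin (k - 1), ((j : ℕ) + 2) * (v j : ℕ)) *
        ∏ j : Fin (k - 1),
          ((-1) ^ ((j : ℕ) + 1) * esymm (Fin k) K ((j : ℕ) + 2)) ^ (v j : ℕ) := by
  obtain ⟨k1, rfl⟩ : ∃ k1, k = k1 + 1 := ⟨k - 1, by omega⟩

  rw [← Finset.piAntidiag_univ_fin_eq_antidiagonalTuple, coeff_G K (k1 + 1) n,
    Finset.sum_congr rfl fun m _ => coeff_Q_pow K (k1 + 1) n m,
    Finset.sum_congr rfl fun m _ => comb K k1 n m]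
  exact Finset.sum_fiberwise_of_maps_to (fun v hv => by rw [Finset.mem_range]; omega) _
end

section
/- Let n be a positive integer and x, y, z be indeterminates (elements of a field of characteristic 0, pairwise distinct). Then the sum over all pairs of non-negative integers (i, j) with 2i + 3j ≤ n of (-1)^i · C(i+j, j) · C(n-i-2j, i+j) · (x+y+z)^{n-2i-3j} · (xy+yz+zx)^i · (xyz)^j equals (xy(x^{n+1} - y^{n+1}) - xz(x^{n+1} - z^{n+1}) + yz(y^{n+1} - z^{n+1})) / ((x-y)(x-z)(y-z)). -/
open Finset

namespace SuryAux

/-- Pascal's rule with truncated subtraction. -/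
lemma choose_sub_one (m k : ℕ) (h : 1 ≤ m ∨ 1 ≤ k) :
    m.choose (k+1) = (m-1).choose k + (m-1).choose (k+1) := by
  rcases m with _ | m
  · have hk : 0 < k := by omega
    simp [Nat.choose_eq_zero_of_lt hk]
  · simp [Nat.choose_succ_succ]

/-- The coefficient in Sury's sum. -/
def c (n i j : ℕ) : ℤ := (-1)^i * ((i+j).choose j) * ((n - i - 2*j).choose (i+j))

lemma c_eq_zero {n i j : ℕ} (h : n < 2*i + 3*j) : c n i j = 0 := by
  have h' : n - i - 2*j < i + j := by omega
  simp [c, Nat.choose_eq_zero_of_lt h']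

lemma c_rec {n : ℕ} (hn : 3 ≤ n) (i j : ℕ) :
    c n i j = c (n-1) i j
      - (if i = 0 then 0 else c (n-2) (i-1) j)
      + (if j = 0 then 0 else c (n-3) i (j-1)) := by
  rcases i with _ | k <;> rcases j with _ | l
  · simp [c]
  · have h1 : n - 1 - 0 - 2*(l+1) = (n - 0 - 2*(l+1)) - 1 := by omega
    have h2 : n - 3 - 0 - 2*l = (n - 0 - 2*(l+1)) - 1 := by omega
    have key : (n - 0 - 2*(l+1)).choose (l+1)
        = ((n - 0 - 2*(l+1)) - 1).choose l + ((n - 0 - 2*(l+1)) - 1).choose (l+1) :=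
      choose_sub_one _ _ (by omega)
    simp only [c, h1, h2, key, Nat.zero_add, Nat.choose_self, pow_zero, one_mul,
      if_neg (Nat.succ_ne_zero l), if_pos rfl, Nat.add_sub_cancel]
    push_cast
    ring
  · have h1 : n - 1 - (k+1) - 2*0 = (n - (k+1) - 2*0) - 1 := by omega
    have h2 : n - 2 - k - 2*0 = (n - (k+1) - 2*0) - 1 := by omega
    have key : (n - (k+1) - 2*0).choose (k+1)
        = ((n - (k+1) - 2*0) - 1).choose k + ((n - (k+1) - 2*0) - 1).choose (k+1) :=
      choose_sub_one _ _ (by omega)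
    simp only [c, h1, h2, key, Nat.add_zero, Nat.choose_zero_right,
      if_neg (Nat.succ_ne_zero k), if_pos rfl, Nat.add_sub_cancel, mul_one, one_mul]
    push_cast
    ring
  · have h1 : n - 1 - (k+1) - 2*(l+1) = (n - (k+1) - 2*(l+1)) - 1 := by omega
    have h2 : n - 2 - k - 2*(l+1) = (n - (k+1) - 2*(l+1)) - 1 := by omega
    have h3 : n - 3 - (k+1) - 2*l = (n - (k+1) - 2*(l+1)) - 1 := by omega
    have key : (n - (k+1) - 2*(l+1)).choose (k+1+(l+1))
        = ((n - (k+1) - 2*(l+1)) - 1).choose (k+l+1)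
          + ((n - (k+1) - 2*(l+1)) - 1).choose (k+1+(l+1)) := by
      have := choose_sub_one (n - (k+1) - 2*(l+1)) (k+l+1) (by omega)
      have e : k+l+1+1 = k+1+(l+1) := by omega
      rw [e] at this
      exact this
    have pas : (k+1+(l+1)).choose (l+1) = (k+l+1).choose l + (k+l+1).choose (l+1) := by
      have e : k+1+(l+1) = (k+l+1)+1 := by omega
      rw [e]
      exact Nat.choose_succ_succ _ _
    have e4 : k + (l+1) = k + l + 1 := by omega
    have e5 : k + 1 + l = k + l + 1 := by omega
    simp only [c, h1, h2, h3, key, pas, e4, e5,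
      if_neg (Nat.succ_ne_zero k), if_neg (Nat.succ_ne_zero l), Nat.add_sub_cancel]
    push_cast
    ring

variable {K : Type*} [Field K] (x y z : K)

def mon (n i j : ℕ) : K := (x+y+z)^(n - 2*i - 3*j) * (x*y+y*z+z*x)^i * (x*y*z)^j

def u (n i j : ℕ) : K := (c n i j : K) * mon x y z n i j

def S (n : ℕ) : K := ∑ i ∈ range (n+1), ∑ j ∈ range (n+1), u x y z n i j

lemma u_eq_zero {n i j : ℕ} (h : n < 2*i + 3*j) : u x y z n i j = 0 := by
  simp [u, c_eq_zero h]

lemma sum_ext {n N : ℕ} (h : n + 1 ≤ N) :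
    ∑ i ∈ range N, ∑ j ∈ range N, u x y z n i j = S x y z n := by
  rw [S]
  rw [← Finset.sum_subset (Finset.range_subset_range.2 h) ?h1]
  · refine Finset.sum_congr rfl fun i hi => ?_
    rw [← Finset.sum_subset (Finset.range_subset_range.2 h) ?h2]
    intro j hj hjn
    simp only [Finset.mem_range] at hjn hj
    exact u_eq_zero x y z (by omega)
  case h1 =>
    intro i hi hin
    rw [Finset.mem_range] at hin
    refine Finset.sum_eq_zero fun j hj => ?_
    exact u_eq_zero x y z (by omega)

lemma S_rec {n : ℕ} (hn : 3 ≤ n) :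
    S x y z n = (x+y+z) * S x y z (n-1)
      - (x*y+y*z+z*x) * S x y z (n-2) + (x*y*z) * S x y z (n-3) := by
  rw [← sum_ext x y z (show (n-1) + 1 ≤ n+1 by omega),
      ← sum_ext x y z (show (n-2) + 1 ≤ n+1 by omega),
      ← sum_ext x y z (show (n-3) + 1 ≤ n+1 by omega)]
  have e1sum : (x+y+z) * ∑ i ∈ range (n+1), ∑ j ∈ range (n+1), u x y z (n-1) i j
      = ∑ i ∈ range (n+1), ∑ j ∈ range (n+1), (c (n-1) i j : K) * mon x y z n i j := by
    rw [Finset.mul_sum]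
    refine Finset.sum_congr rfl fun i _ => ?_
    rw [Finset.mul_sum]
    refine Finset.sum_congr rfl fun j _ => ?_
    by_cases h : 2*i + 3*j ≤ n - 1
    · have hx : n - 2*i - 3*j = (n - 1 - 2*i - 3*j) + 1 := by omega
      rw [u, mon, mon, hx, pow_succ]
      ring
    · rw [u_eq_zero x y z (by omega), c_eq_zero (by omega)]
      simp
  have e2sum : (x*y+y*z+z*x) * ∑ i ∈ range (n+1), ∑ j ∈ range (n+1), u x y z (n-2) i j
      = ∑ i ∈ range (n+1), ∑ j ∈ range (n+1),
          (if i = 0 then 0 else (c (n-2) (i-1) j : K)) * mon x y z n i j := by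
    rw [Finset.mul_sum]
    have step : ∀ i, (x*y+y*z+z*x) * ∑ j ∈ range (n+1), u x y z (n-2) i j
        = ∑ j ∈ range (n+1),
            (if i+1 = 0 then 0 else (c (n-2) (i+1-1) j : K)) * mon x y z n (i+1) j := by
      intro i
      rw [Finset.mul_sum]
      refine Finset.sum_congr rfl fun j _ => ?_
      have hx : n - 2*(i+1) - 3*j = n - 2 - 2*i - 3*j := by omega
      simp only [if_neg (Nat.succ_ne_zero i), Nat.add_sub_cancel]
      rw [u, mon, mon, hx, pow_succ]
      ring
    set g : ℕ → K := fun i => ∑ j ∈ range (n+1),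
        (if i = 0 then 0 else (c (n-2) (i-1) j : K)) * mon x y z n i j with hg
    have hstep : ∑ i ∈ range (n+1), (x*y+y*z+z*x) * ∑ j ∈ range (n+1), u x y z (n-2) i j
        = ∑ i ∈ range (n+1), g (i+1) :=
      Finset.sum_congr rfl fun i _ => step i
    rw [hstep]
    have h0 : g 0 = 0 := by simp [hg]
    have htop : g (n+1) = 0 := by
      refine Finset.sum_eq_zero fun j _ => ?_
      rw [if_neg (Nat.succ_ne_zero n), Nat.add_sub_cancel, c_eq_zero (by omega)]
      simp
    have := Finset.sum_range_succ' g (n+1)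
    rw [Finset.sum_range_succ] at this
    rw [h0, htop] at this
    simp only [add_zero] at this
    rw [← this]
  have e3sum : (x*y*z) * ∑ i ∈ range (n+1), ∑ j ∈ range (n+1), u x y z (n-3) i j
      = ∑ i ∈ range (n+1), ∑ j ∈ range (n+1),
          (if j = 0 then 0 else (c (n-3) i (j-1) : K)) * mon x y z n i j := by
    rw [Finset.mul_sum]
    refine Finset.sum_congr rfl fun i _ => ?_
    rw [Finset.mul_sum]
    have step : ∀ j, (x*y*z) * u x y z (n-3) i j
        = (if j+1 = 0 then 0 else (c (n-3) i (j+1-1) : K)) * mon x y z n i (j+1) := by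
      intro j
      have hx : n - 2*i - 3*(j+1) = n - 3 - 2*i - 3*j := by omega
      simp only [if_neg (Nat.succ_ne_zero j), Nat.add_sub_cancel]
      rw [u, mon, mon, hx, pow_succ]
      ring
    set g : ℕ → K := fun j =>
        (if j = 0 then 0 else (c (n-3) i (j-1) : K)) * mon x y z n i j with hg
    have hstep : ∑ j ∈ range (n+1), (x*y*z) * u x y z (n-3) i j
        = ∑ j ∈ range (n+1), g (j+1) :=
      Finset.sum_congr rfl fun j _ => step j
    rw [hstep]
    have h0 : g 0 = 0 := by simp [hg]
    have htop : g (n+1) = 0 := by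
      show (if n+1 = 0 then 0 else (c (n-3) i (n+1-1) : K)) * mon x y z n i (n+1) = 0
      rw [if_neg (Nat.succ_ne_zero n), Nat.add_sub_cancel, c_eq_zero (by omega)]
      simp
    have := Finset.sum_range_succ' g (n+1)
    rw [Finset.sum_range_succ] at this
    rw [h0, htop] at this
    simp only [add_zero] at this
    rw [← this]
  rw [e1sum, e2sum, e3sum, S, ← Finset.sum_sub_distrib, ← Finset.sum_add_distrib]
  refine Finset.sum_congr rfl fun i _ => ?_
  rw [← Finset.sum_sub_distrib, ← Finset.sum_add_distrib]
  refine Finset.sum_congr rfl fun j _ => ?_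
  rw [u]
  have hc := c_rec hn i j
  have hcast : (c n i j : K)
      = ((c (n-1) i j - (if i = 0 then 0 else c (n-2) (i-1) j)
          + (if j = 0 then 0 else c (n-3) i (j-1)) : ℤ) : K) := by
    rw [← hc]
  rw [hcast]
  push_cast [apply_ite (fun t : ℤ => (t : K))]
  ring

/-- The key closed form: `S n` equals the divided-difference expression. -/
lemma S_eq (hxy : x ≠ y) (hxz : x ≠ z) (hyz : y ≠ z) (n : ℕ) :
    S x y z n =
      (x * y * (x ^ (n + 1) - y ^ (n + 1)) - x * z * (x ^ (n + 1) - z ^ (n + 1)) +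
          y * z * (y ^ (n + 1) - z ^ (n + 1))) / ((x - y) * (x - z) * (y - z)) := by
  have hD : (x - y) * (x - z) * (y - z) ≠ 0 := by
    apply mul_ne_zero (mul_ne_zero (sub_ne_zero.2 hxy) (sub_ne_zero.2 hxz))
      (sub_ne_zero.2 hyz)
  induction n using Nat.strong_induction_on with
  | _ n ih =>
    rcases n with _ | (_ | (_ | m))
    · rw [eq_div_iff hD]
      norm_num [S, u, c, mon, Finset.sum_range_succ]
      ring
    · rw [eq_div_iff hD]
      norm_num [S, u, c, mon, Finset.sum_range_succ, Nat.choose]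
      ring
    · rw [eq_div_iff hD]
      norm_num [S, u, c, mon, Finset.sum_range_succ, Nat.choose]
      ring
    · have h1 := ih (m+2) (by omega)
      have h2 := ih (m+1) (by omega)
      have h3 := ih m (by omega)
      rw [S_rec x y z (show 3 ≤ m+1+1+1 by omega)]
      have e1 : m+1+1+1-1 = m+2 := by omega
      have e2 : m+1+1+1-2 = m+1 := by omega
      have e3 : m+1+1+1-3 = m := by omega
      rw [e1, e2, e3, h1, h2, h3, eq_div_iff hD]
      field_simp
      ring

end SuryAux

/-- **Sury's identity in three variables (Theorem 3 of Sury).**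
For a positive integer `n` and pairwise distinct `x, y, z` in a field of characteristic `0`,
`∑_{2i+3j ≤ n} (-1)^i C(i+j, j) C(n-i-2j, i+j) (x+y+z)^{n-2i-3j} (xy+yz+zx)^i (xyz)^j`
equals
`(xy(x^{n+1}-y^{n+1}) - xz(x^{n+1}-z^{n+1}) + yz(y^{n+1}-z^{n+1})) / ((x-y)(x-z)(y-z))`. -/
theorem sury_three_variable_identity (K : Type*) [Field K] [CharZero K] (n : ℕ) (hn : 1 ≤ n)
    (x y z : K) (hxy : x ≠ y) (hxz : x ≠ z) (hyz : y ≠ z) :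
    ∑ p ∈ (Finset.range (n + 1) ×ˢ Finset.range (n + 1)).filter
        (fun p => 2 * p.1 + 3 * p.2 ≤ n),
      (-1 : K) ^ p.1 * ((p.1 + p.2).choose p.2 : K) *
        ((n - p.1 - 2 * p.2).choose (p.1 + p.2) : K) *
        (x + y + z) ^ (n - 2 * p.1 - 3 * p.2) *
        (x * y + y * z + z * x) ^ p.1 * (x * y * z) ^ p.2 =
    (x * y * (x ^ (n + 1) - y ^ (n + 1)) - x * z * (x ^ (n + 1) - z ^ (n + 1)) +
        y * z * (y ^ (n + 1) - z ^ (n + 1))) / ((x - y) * (x - z) * (y - z)) := by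
  rw [← SuryAux.S_eq x y z hxy hxz hyz n]
  rw [Finset.sum_filter_of_ne]
  · rw [Finset.sum_product, SuryAux.S]
    refine Finset.sum_congr rfl fun i _ => Finset.sum_congr rfl fun j _ => ?_
    rw [SuryAux.u, SuryAux.c, SuryAux.mon]
    push_cast
    ring
  · rintro ⟨i, j⟩ hp hne
    by_contra h
    apply hne
    have h' : n - i - 2*j < i + j := by omega
    simp [Nat.choose_eq_zero_of_lt h']
end

section
/- Let r ≥ 1 and let c_1, c_2, ..., c_r be real numbers. Define the sequence (u_n) by the r-th order linear recurrence u_n = c_1 u_{n-1} + c_2 u_{n-2} + ... + c_r u_{n-r} for n ≥ 1, with initial conditions u_0 = 1 and u_j = 0 for j < 0 (set c_t = 0 for t > r). Then for every positive integer n, u_n = det(C), where C is the n×n matrix with entries C_{i,j} = (-1)^{j-i} c_{j-i+1} for j ≥ i (so the diagonal is c_1, the first superdiagonal is -c_2, the second superdiagonal is c_3, ..., up to the (r-1)-st superdiagonal (-1)^{r+1} c_r, and 0 beyond), C_{i+1,i} = 1 on the first subdiagonal, and all other entries 0. -/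
namespace LinRecDet

def fent (c : ℕ → ℝ) (i j : ℕ) : ℝ :=
  if i ≤ j then (-1 : ℝ) ^ (j - i) * c (j - i + 1)
  else if i = j + 1 then 1 else 0

def A (c : ℕ → ℝ) (n : ℕ) : Matrix (Fin n) (Fin n) ℝ :=
  fun i j => fent c i j

lemma fent_shift (c : ℕ → ℝ) (i j : ℕ) : fent c (i + 1) (j + 1) = fent c i j := by
  simp [fent, Nat.succ_sub_succ]

lemma fent_col_zero (c : ℕ → ℝ) (i : ℕ) : fent c (i + 1) 0 = if i = 0 then 1 else 0 := by
  simp [fent]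

lemma minor_det (c : ℕ → ℝ) :
    ∀ (n : ℕ) (j : Fin (n + 1)),
      ((A c (n + 1)).submatrix Fin.succ j.succAbove).det = (A c (n - (j : ℕ))).det := by
  intro n
  induction n with
  | zero =>
    intro j
    have h1 : ((A c 1).submatrix Fin.succ j.succAbove).det = 1 := Matrix.det_fin_zero
    have hj : 0 - (j : ℕ) = 0 := by omega
    rw [h1, hj]
    exact Matrix.det_fin_zero.symm
  | succ m ih =>
    intro j
    induction j using Fin.cases with
    | zero =>
      have : (A c (m + 2)).submatrix Fin.succ (Fin.succAbove 0) = A c (m + 1) := by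
        ext i k
        simp [Matrix.submatrix, A, Fin.succAbove_zero, fent_shift]
      rw [this]
      simp
      rfl
    | succ j' =>
      set N := (A c (m + 2)).submatrix Fin.succ (Fin.succ j').succAbove with hN
      have hcol : ∀ i : Fin (m + 1), N i 0 = if i = 0 then 1 else 0 := by
        intro i
        have h0 : (Fin.succ j').succAbove 0 = 0 := Fin.succ_succAbove_zero j'
        have : N i 0 = fent c ((i : ℕ) + 1) 0 := by
          simp [hN, Matrix.submatrix, A, h0]
        rw [this, fent_col_zero]
        by_cases hi0 : i = 0 <;> simp [hi0, Fin.val_eq_zero_iff]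
      rw [Matrix.det_succ_column_zero]
      rw [Finset.sum_eq_single (0 : Fin (m + 1))]
      · have hsub : N.submatrix (Fin.succAbove 0) Fin.succ
            = (A c (m + 1)).submatrix Fin.succ j'.succAbove := by
          ext i k
          have h1 : (Fin.succ j').succAbove (Fin.succ k) = Fin.succ (j'.succAbove k) :=
            Fin.succ_succAbove_succ j' k
          simp [hN, Matrix.submatrix, A, Fin.succAbove_zero, h1, fent_shift]
        rw [hcol, hsub, ih j']
        have hj : m + 1 - ((j'.succ : Fin (m+2)) : ℕ) = m - (j' : ℕ) := by
          simp [Fin.val_succ]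
        rw [hj]
        simp
      · intro i _ hi
        rw [hcol]
        simp [hi]
      · intro h
        simp at h

lemma det_rec (c : ℕ → ℝ) (n : ℕ) :
    (A c (n + 1)).det = ∑ t ∈ Finset.Icc 1 (n + 1), c t * (A c (n + 1 - t)).det := by
  rw [Matrix.det_succ_row_zero]
  have hterm : ∀ j : Fin (n + 1),
      (-1 : ℝ) ^ (j : ℕ) * (A c (n + 1)) 0 j * ((A c (n + 1)).submatrix Fin.succ j.succAbove).det
        = c ((j : ℕ) + 1) * (A c (n - (j : ℕ))).det := by
    intro j
    rw [minor_det]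
    have hA : (A c (n + 1)) 0 j = (-1 : ℝ) ^ (j : ℕ) * c ((j : ℕ) + 1) := by
      simp [A, fent]
    rw [hA]
    have hpow : (-1 : ℝ) ^ (j : ℕ) * (-1 : ℝ) ^ (j : ℕ) = 1 := by
      rw [← pow_add]; exact Even.neg_one_pow ⟨(j : ℕ), by ring⟩
    calc (-1 : ℝ) ^ (j : ℕ) * ((-1 : ℝ) ^ (j : ℕ) * c ((j : ℕ) + 1)) * (A c (n - (j:ℕ))).det
        = ((-1 : ℝ) ^ (j : ℕ) * (-1 : ℝ) ^ (j : ℕ)) * (c ((j : ℕ) + 1) * (A c (n - (j:ℕ))).det) := by ring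
      _ = c ((j : ℕ) + 1) * (A c (n - (j:ℕ))).det := by rw [hpow, one_mul]
  rw [Finset.sum_congr rfl (fun j _ => hterm j)]
  rw [Fin.sum_univ_eq_sum_range (fun j => c (j + 1) * (A c (n - j)).det)]
  rw [← Finset.Ico_add_one_right_eq_Icc, Finset.sum_Ico_eq_sum_range]
  apply Finset.sum_congr (by norm_num)
  intro i hi
  simp only [Finset.mem_range] at hi
  have h1 : 1 + i = i + 1 := by omega
  rw [h1]
  have h3 : n + 1 - (i + 1) = n - i := by omega
  rw [h3]

end LinRecDet

/-- **Determinantal interpretation of general linear recurrences.**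
Let `c_1, …, c_r` be real numbers (with `c_t = 0` for `t > r`), and let `u` satisfy
`u_0 = 1`, `u_j = 0` for `j < 0`, and `u_n = c_1 u_{n-1} + ⋯ + c_r u_{n-r}` for `n ≥ 1`.
Then for every positive integer `n`, `u_n` equals the determinant of the `n × n`
Hessenberg matrix with `(i,j)` entry `(-1)^{j-i} c_{j-i+1}` for `j ≥ i`,
entry `1` on the first subdiagonal, and `0` elsewhere. -/
theorem linear_recurrence_eq_det (r : ℕ) (hr : 1 ≤ r) (c : ℕ → ℝ) (hc : ∀ t, r < t → c t = 0)
    (u : ℤ → ℝ) (hu0 : u 0 = 1) (huneg : ∀ j : ℤ, j < 0 → u j = 0)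
    (hrec : ∀ m : ℤ, 1 ≤ m → u m = ∑ t ∈ Finset.Icc 1 r, c t * u (m - (t : ℤ)))
    (n : ℕ) (hn : 1 ≤ n) :
    u n = Matrix.det (fun i j : Fin n =>
      if (i : ℕ) ≤ (j : ℕ) then (-1 : ℝ) ^ ((j : ℕ) - (i : ℕ)) * c ((j : ℕ) - (i : ℕ) + 1)
      else if (i : ℕ) = (j : ℕ) + 1 then 1 else 0) := by
  have main : ∀ n : ℕ, u n = (LinRecDet.A c n).det := by
    intro n
    induction n using Nat.strong_induction_on with
    | _ n ih =>
      match n with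
      | 0 => simpa [Matrix.det_fin_zero] using hu0
      | m + 1 =>
        have h1 : u (m + 1 : ℕ) = ∑ t ∈ Finset.Icc 1 r, c t * u ((m + 1 : ℕ) - (t : ℤ)) := by
          have := hrec ((m + 1 : ℕ) : ℤ) (by exact_mod_cast Nat.succ_le_succ (Nat.zero_le m))
          exact this
        set Mx := max r (m + 1) with hMx
        have h2 : ∑ t ∈ Finset.Icc 1 r, c t * u ((m + 1 : ℕ) - (t : ℤ))
            = ∑ t ∈ Finset.Icc 1 Mx, c t * u ((m + 1 : ℕ) - (t : ℤ)) := by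
          apply Finset.sum_subset
          · apply Finset.Icc_subset_Icc_right; exact le_max_left _ _
          · intro t ht hnt
            simp only [Finset.mem_Icc] at ht hnt
            have : r < t := by omega
            rw [hc t this, zero_mul]
        have h3 : ∑ t ∈ Finset.Icc 1 Mx, c t * u ((m + 1 : ℕ) - (t : ℤ))
            = ∑ t ∈ Finset.Icc 1 Mx, c t *
                (if t ≤ m + 1 then (LinRecDet.A c (m + 1 - t)).det else 0) := by
          apply Finset.sum_congr rfl
          intro t ht
          simp only [Finset.mem_Icc] at ht
          congr 1
          by_cases hle : t ≤ m + 1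
          · rw [if_pos hle]
            have hcast : ((m + 1 : ℕ) : ℤ) - (t : ℤ) = ((m + 1 - t : ℕ) : ℤ) := by
              push_cast [Nat.cast_sub hle]; ring
            rw [hcast, ih (m + 1 - t) (by omega)]
          · rw [if_neg hle]
            apply huneg
            omega
        have h4 : ∑ t ∈ Finset.Icc 1 Mx, c t *
              (if t ≤ m + 1 then (LinRecDet.A c (m + 1 - t)).det else 0)
            = ∑ t ∈ Finset.Icc 1 (m + 1), c t * (LinRecDet.A c (m + 1 - t)).det := by
          rw [← Finset.sum_subset (Finset.Icc_subset_Icc_right (le_max_right r (m + 1)))]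
          · apply Finset.sum_congr rfl
            intro t ht
            simp only [Finset.mem_Icc] at ht
            rw [if_pos ht.2]
          · intro t ht hnt
            simp only [Finset.mem_Icc] at ht hnt
            rw [if_neg (by omega), mul_zero]
        rw [h1, h2, h3, h4, ← LinRecDet.det_rec]
  rw [main n]
  rfl
end

section
/- Let r ≥ 1 and let (F_n) be the r-acci numbers, defined by F_n = F_{n-1} + F_{n-2} + ... + F_{n-r} for n ≥ 1, with F_0 = 1 and F_i = 0 for i < 0. Then for every positive integer n, F_n = det(G), where G is the n×n matrix with entries G_{i,j} = (-1)^{j-i} for 0 ≤ j-i ≤ r-1 (so the diagonal is all 1s, the first superdiagonal all -1s, the second superdiagonal all 1s, alternating up to the (r-1)-st superdiagonal), G_{i+1,i} = 1 on the first subdiagonal, and all other entries 0. -/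
private def Ent (r : ℕ) : ℕ → ℕ → ℤ := fun a b =>
  if a ≤ b ∧ b - a < r then (-1 : ℤ) ^ (b - a) else if a = b + 1 then 1 else 0

private def dd (r n : ℕ) : ℤ := Matrix.det (fun i j : Fin n => Ent r i j)

private lemma coe_succAbove (n : ℕ) (i : Fin (n + 1)) (p : Fin n) :
    ((i.succAbove p : Fin (n + 1)) : ℕ) = if (p : ℕ) < (i : ℕ) then (p : ℕ) else (p : ℕ) + 1 := by
  rw [Fin.succAbove]
  split_ifs with h1 h2 h3
  · simp
  · exact absurd (by simpa [Fin.lt_def] using h1) h2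
  · exact absurd (by simpa [Fin.lt_def] using h3) h1
  · simp

private lemma detB (r i : ℕ) : ∀ n, i ≤ n →
    Matrix.det (fun p q : Fin n => Ent r (if (p : ℕ) < i then (p : ℕ) else (p : ℕ) + 1) q)
      = dd r i := by
  intro n
  induction n with
  | zero => intro h; interval_cases i; rfl
  | succ m ih =>
    intro h
    rcases Nat.lt_or_ge i (m + 1) with hi | hi
    · -- i ≤ m : expand along last row
      refine (Matrix.det_succ_row _ (Fin.last m)).trans ?_; beta_reduce
      rw [Finset.sum_eq_single (Fin.last m)]
      · have hrow : Ent r (if ((Fin.last m : Fin (m+1)) : ℕ) < i then ((Fin.last m : Fin (m+1)) : ℕ) else ((Fin.last m : Fin (m+1)) : ℕ) + 1) (Fin.last m) = 1 := by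
          have : ¬ ((m : ℕ) < i) := by omega
          simp only [Fin.val_last, this, if_false, Ent]
          have : ¬ (m + 1 ≤ m ∧ m - (m+1) < r) := by omega
          simp [this]
        rw [hrow]
        have hsub : (Matrix.submatrix (fun p q : Fin (m+1) => Ent r (if (p : ℕ) < i then (p : ℕ) else (p : ℕ) + 1) q) (Fin.last m).succAbove (Fin.last m).succAbove)
            = fun p q : Fin m => Ent r (if (p : ℕ) < i then (p : ℕ) else (p : ℕ) + 1) q := by
          funext p q
          simp [Matrix.submatrix, Fin.succAbove_last]
        rw [hsub, ih (by omega)]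
        simp only [Fin.val_last, one_mul, mul_one]
        rw [Even.neg_one_pow ⟨m, rfl⟩, one_mul]
      · intro j _ hj
        have hz : Ent r (if ((Fin.last m : Fin (m+1)) : ℕ) < i then ((Fin.last m : Fin (m+1)) : ℕ) else ((Fin.last m : Fin (m+1)) : ℕ) + 1) j = 0 := by
          have h1 : ¬ ((m : ℕ) < i) := by omega
          have hjm : (j : ℕ) < m := by
            have := j.isLt
            have : (j : ℕ) ≠ m := fun hc => hj (Fin.ext (by simp [hc]))
            omega
          simp only [Fin.val_last, h1, if_false, Ent]
          have h2 : ¬ (m + 1 ≤ (j : ℕ) ∧ (j : ℕ) - (m+1) < r) := by omega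
          have h3 : ¬ (m + 1 = (j : ℕ) + 1) := by omega
          rw [if_neg h2, if_neg h3]
        rw [hz]; ring
      · intro h; exact absurd (Finset.mem_univ _) h
    · -- i = m + 1 : the matrix is Mt itself
      have hi' : i = m + 1 := by omega
      subst hi'
      have : (fun p q : Fin (m+1) => Ent r (if (p : ℕ) < m + 1 then (p : ℕ) else (p : ℕ) + 1) q)
          = fun p q : Fin (m+1) => Ent r p q := by
        funext p q
        have : (p : ℕ) < m + 1 := p.isLt
        simp [this]
      rw [this]; rfl

private lemma dd_zero (r : ℕ) : dd r 0 = 1 := by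
  exact Matrix.det_fin_zero

private lemma dd_rec (r n : ℕ) :
    dd r (n + 1) = ∑ i ∈ Finset.range (n + 1), if n - i < r then dd r i else 0 := by
  rw [dd]; refine (Matrix.det_succ_column _ (Fin.last n)).trans ?_; beta_reduce
  rw [← Fin.sum_univ_eq_sum_range]
  apply Finset.sum_congr rfl
  intro i _
  have hsub : (Matrix.submatrix (fun p q : Fin (n+1) => Ent r p q) i.succAbove (Fin.last n).succAbove)
      = fun p q : Fin n => Ent r (if (p : ℕ) < (i : ℕ) then (p : ℕ) else (p : ℕ) + 1) q := by
    funext p q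
    simp [Matrix.submatrix, Fin.succAbove_last, coe_succAbove]
  rw [hsub, detB r i n (by omega)]
  have hin : (i : ℕ) ≤ n := by omega
  by_cases hc : n - (i : ℕ) < r
  · have hent : Ent r i (Fin.last n) = (-1 : ℤ) ^ (n - (i : ℕ)) := by
      simp [Ent, Fin.val_last, hin, hc]
    rw [hent, if_pos hc]
    have : (-1 : ℤ) ^ ((i : ℕ) + n) * (-1 : ℤ) ^ (n - (i : ℕ)) = 1 := by
      rw [← pow_add]
      have : (i : ℕ) + n + (n - (i : ℕ)) = 2 * n := by omega
      rw [this]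
      simp [pow_mul]
    simp only [Fin.val_last]
    rw [this, one_mul]
  · have hent : Ent r i (Fin.last n) = 0 := by
      have h3 : ¬ ((i:ℕ) = n + 1) := by omega
      simp [Ent, Fin.val_last, hin, hc, h3]
    rw [hent, if_neg hc]; ring

private lemma F_eq_dd (r : ℕ) (hr : 1 ≤ r) (F : ℤ → ℤ) (hF0 : F 0 = 1)
    (hFneg : ∀ i : ℤ, i < 0 → F i = 0)
    (hrec : ∀ m : ℤ, 1 ≤ m → F m = ∑ t ∈ Finset.Icc 1 r, F (m - (t : ℤ))) :
    ∀ n : ℕ, F n = dd r n := by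
  intro n
  induction n using Nat.strong_induction_on with
  | _ n ih =>
    match n with
    | 0 => rw [dd_zero]; exact_mod_cast hF0
    | m + 1 =>
      have hcast0 : ((m + 1 : ℕ) : ℤ) = (m : ℤ) + 1 := by push_cast; ring
      rw [hcast0, hrec ((m : ℤ) + 1) (by omega), dd_rec]
      have hL : ∀ t ∈ Finset.Icc 1 r, F (((m : ℤ) + 1) - (t : ℤ))
          = (if t - 1 ≤ m then dd r (m - (t - 1)) else 0) := by
        intro t ht
        simp only [Finset.mem_Icc] at ht
        by_cases htm : t - 1 ≤ m
        · rw [if_pos htm]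
          have hcast : ((m : ℤ) + 1) - (t : ℤ) = ((m - (t - 1) : ℕ) : ℤ) := by
            push_cast; omega
          rw [hcast, ih _ (by omega)]
        · rw [if_neg htm, hFneg]
          push_cast; omega
      rw [Finset.sum_congr rfl hL]
      have h1 : ∑ t ∈ Finset.Icc 1 r, (if t - 1 ≤ m then dd r (m - (t - 1)) else 0)
          = ∑ j ∈ Finset.range r, (if j ≤ m then dd r (m - j) else 0) := by
        rw [← Finset.Ico_add_one_right_eq_Icc, Finset.sum_Ico_eq_sum_range]
        apply Finset.sum_congr (by congr 1)
        intro j _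
        have : 1 + j - 1 = j := by omega
        rw [this]
      rw [h1]
      rw [← Finset.sum_range_reflect (fun i => if m - i < r then dd r i else 0) (m + 1)]
      have h2 : ∀ j ∈ Finset.range (m + 1),
          (if m - (m + 1 - 1 - j) < r then dd r (m + 1 - 1 - j) else 0)
          = (if j < r then dd r (m - j) else 0) := by
        intro j hj
        simp only [Finset.mem_range] at hj
        have e1 : m + 1 - 1 - j = m - j := by omega
        have e2 : m - (m - j) = j := by omega
        rw [e1, e2]
      rw [Finset.sum_congr rfl h2]
      rw [← Finset.sum_filter, ← Finset.sum_filter]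
      apply Finset.sum_congr _ (fun _ _ => rfl)
      ext j
      simp only [Finset.mem_filter, Finset.mem_range]
      omega


/-- **Determinantal formula for the `r`-acci numbers.**
Let `F` satisfy `F_0 = 1`, `F_i = 0` for `i < 0`, and
`F_n = F_{n-1} + F_{n-2} + ⋯ + F_{n-r}` for `n ≥ 1`. Then for every positive integer `n`,
`F_n` equals the determinant of the `n × n` Hessenberg matrix whose `(i,j)` entry is
`(-1)^{j-i}` when `0 ≤ j - i ≤ r - 1`, is `1` on the first subdiagonal, and is `0`
elsewhere. -/
theorem racci_eq_det (r : ℕ) (hr : 1 ≤ r) (F : ℤ → ℤ) (hF0 : F 0 = 1)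
    (hFneg : ∀ i : ℤ, i < 0 → F i = 0)
    (hrec : ∀ m : ℤ, 1 ≤ m → F m = ∑ t ∈ Finset.Icc 1 r, F (m - (t : ℤ)))
    (n : ℕ) (hn : 1 ≤ n) :
    F n = Matrix.det (fun i j : Fin n =>
      if (i : ℕ) ≤ (j : ℕ) ∧ (j : ℕ) - (i : ℕ) < r then (-1 : ℤ) ^ ((j : ℕ) - (i : ℕ))
      else if (i : ℕ) = (j : ℕ) + 1 then 1 else 0) := by
  have := F_eq_dd r hr F hF0 hFneg hrec n
  rw [this]
  rfl
end

section
/- Let r ≥ 1 and let F_n be the n-th term of the r-acci numbers. Then F_n equals the sum, over all tuples of non-negative integers (i_2, ..., i_r) with 2i_2 + 3i_3 + ... + r·i_r ≤ n, of the multinomial coefficient (n - i_2 - 2i_3 - ... - (r-1)i_r)! / (i_2! ··· i_r! · (n - 2i_2 - 3i_3 - ... - r·i_r)!). -/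
open Finset Nat

/-- Weighted antidiagonal: functions `σ : Fin r → ℕ` with `∑ (t+1)·σ t = n`. -/
def racciW (r n : ℕ) : Finset (Fin r → ℕ) :=
  (Fintype.piFinset fun _ => Finset.range (n + 1)).filter
    (fun σ => ∑ t : Fin r, ((t : ℕ) + 1) * σ t = n)

lemma racciW_mem {r n : ℕ} {σ : Fin r → ℕ} :
    σ ∈ racciW r n ↔ ∑ t : Fin r, ((t : ℕ) + 1) * σ t = n := by
  constructor
  · intro h; exact (Finset.mem_filter.mp h).2
  · intro h
    refine Finset.mem_filter.mpr ⟨Fintype.mem_piFinset.mpr fun t => ?_, h⟩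
    rw [Finset.mem_range]
    have h1 : σ t ≤ ((t : ℕ) + 1) * σ t := Nat.le_mul_of_pos_left _ (Nat.succ_pos _)
    have h2 : ((t : ℕ) + 1) * σ t ≤ ∑ t : Fin r, ((t : ℕ) + 1) * σ t :=
      Finset.single_le_sum (f := fun s : Fin r => ((s : ℕ) + 1) * σ s) (fun s _ => Nat.zero_le _) (Finset.mem_univ t)
    omega

def racciT (r n : ℕ) : ℕ := ∑ σ ∈ racciW r n, Nat.multinomial Finset.univ σ

lemma racciT_zero (r : ℕ) : racciT r 0 = 1 := by
  have h : racciW r 0 = {fun _ => 0} := by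
    ext σ
    rw [racciW_mem, Finset.mem_singleton]
    constructor
    · intro h
      funext t
      have := Finset.sum_eq_zero_iff.mp h t (Finset.mem_univ t)
      simpa using this
    · intro h; subst h; simp
  simp [racciT, h, Nat.multinomial]

lemma racci_update_sum {r : ℕ} (g : Fin r → ℕ → ℕ) (σ : Fin r → ℕ) (t : Fin r) (a : ℕ) :
    ∑ s : Fin r, g s (Function.update σ t a s) =
      g t a + ∑ s ∈ Finset.univ.erase t, g s (σ s) := by
  rw [← Finset.add_sum_erase _ (fun s => g s (Function.update σ t a s)) (Finset.mem_univ t)]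
  rw [Function.update_self]
  congr 1
  exact Finset.sum_congr rfl fun s hs => by
    rw [Function.update_of_ne (Finset.mem_erase.mp hs).1]

lemma racci_pascal {r : ℕ} (σ : Fin r → ℕ) (h : 0 < ∑ s : Fin r, σ s) :
    Nat.multinomial Finset.univ σ =
      ∑ t : Fin r, if σ t = 0 then 0 else
        Nat.multinomial Finset.univ (Function.update σ t (σ t - 1)) := by
  have hD : 0 < ∏ s : Fin r, (σ s)! := Finset.prod_pos fun s _ => (σ s).factorial_pos
  apply Nat.eq_of_mul_eq_mul_left hD
  rw [Finset.mul_sum, Nat.multinomial_spec]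
  have key : ∀ t : Fin r,
      ((∏ s : Fin r, (σ s)!) * if σ t = 0 then 0 else
        Nat.multinomial Finset.univ (Function.update σ t (σ t - 1)))
      = σ t * ((∑ s : Fin r, σ s) - 1)! := by
    intro t
    by_cases ht : σ t = 0
    · simp [ht]
    · rw [if_neg ht]
      have hprod : ∏ s : Fin r, (σ s)! =
          σ t * ∏ s : Fin r, (Function.update σ t (σ t - 1) s)! := by
        rw [← Finset.mul_prod_erase _ (fun s => (σ s)!) (Finset.mem_univ t),
            ← Finset.mul_prod_erase _ (fun s => (Function.update σ t (σ t - 1) s)!)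
              (Finset.mem_univ t), Function.update_self, ← mul_assoc]
        congr 1
        · rw [← Nat.mul_factorial_pred ht]
        · exact Finset.prod_congr rfl fun s hs => by
            rw [Function.update_of_ne (Finset.mem_erase.mp hs).1]
      rw [hprod, mul_assoc, Nat.multinomial_spec]
      congr 2
      rw [racci_update_sum (fun _ x => x)]
      rw [← Finset.add_sum_erase _ σ (Finset.mem_univ t)]
      omega
  rw [Finset.sum_congr rfl fun t _ => key t, ← Finset.sum_mul, Nat.mul_factorial_pred h.ne']

lemma racci_inner (r n : ℕ) (t : Fin r) :
    ∑ σ ∈ (racciW r n).filter (fun σ => ¬ σ t = 0),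
      Nat.multinomial Finset.univ (Function.update σ t (σ t - 1))
    = if (t : ℕ) + 1 ≤ n then racciT r (n - ((t : ℕ) + 1)) else 0 := by
  by_cases hc : (t : ℕ) + 1 ≤ n
  · rw [if_pos hc, racciT]
    refine Finset.sum_nbij' (fun σ => Function.update σ t (σ t - 1))
      (fun σ' => Function.update σ' t (σ' t + 1)) ?_ ?_ ?_ ?_ ?_
    · intro σ hσ
      obtain ⟨hW, ht⟩ := Finset.mem_filter.mp hσ
      have hw := racciW_mem.mp hW
      rw [← Finset.add_sum_erase _ (fun s : Fin r => ((s : ℕ) + 1) * σ s) (Finset.mem_univ t)] at hw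
      rw [racciW_mem, racci_update_sum (fun s x => ((s : ℕ) + 1) * x)]
      have ht' : 1 ≤ σ t := Nat.pos_of_ne_zero ht
      -- (t+1)*(σ t - 1) + E = n - (t+1)
      have : ((t : ℕ) + 1) * (σ t - 1) + ((t : ℕ) + 1) = ((t : ℕ) + 1) * σ t := by
        rw [← Nat.mul_succ]; congr 1; omega
      omega
    · intro σ' hσ'
      have hw := racciW_mem.mp hσ'
      rw [← Finset.add_sum_erase _ (fun s : Fin r => ((s : ℕ) + 1) * σ' s) (Finset.mem_univ t)] at hw
      refine Finset.mem_filter.mpr ⟨racciW_mem.mpr ?_, by simp⟩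
      rw [racci_update_sum (fun s x => ((s : ℕ) + 1) * x)]
      have : ((t : ℕ) + 1) * (σ' t + 1) = ((t : ℕ) + 1) * σ' t + ((t : ℕ) + 1) := by ring
      omega
    · intro σ hσ
      obtain ⟨_, ht⟩ := Finset.mem_filter.mp hσ
      show Function.update (Function.update σ t (σ t - 1)) t
          (Function.update σ t (σ t - 1) t + 1) = σ
      rw [Function.update_self, Function.update_idem]
      have h1 : σ t - 1 + 1 = σ t := Nat.succ_pred_eq_of_pos (Nat.pos_of_ne_zero ht)
      rw [h1, Function.update_eq_self]
    · intro σ' _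
      show Function.update (Function.update σ' t (σ' t + 1)) t
          (Function.update σ' t (σ' t + 1) t - 1) = σ'
      rw [Function.update_self, Function.update_idem, Nat.add_sub_cancel,
        Function.update_eq_self]
    · intro σ _; rfl
  · rw [if_neg hc]
    apply Finset.sum_eq_zero
    intro σ hσ
    obtain ⟨hW, ht⟩ := Finset.mem_filter.mp hσ
    have hw := racciW_mem.mp hW
    have h2 : ((t : ℕ) + 1) * σ t ≤ n := hw ▸
      Finset.single_le_sum (f := fun s : Fin r => ((s : ℕ) + 1) * σ s)
        (fun s _ => Nat.zero_le _) (Finset.mem_univ t)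
    have ht' : 1 ≤ σ t := Nat.pos_of_ne_zero ht
    have : (t : ℕ) + 1 ≤ ((t : ℕ) + 1) * σ t := Nat.le_mul_of_pos_right _ ht'
    omega

lemma racciT_rec (r n : ℕ) (hn : 1 ≤ n) :
    racciT r n = ∑ u ∈ Finset.Icc 1 r, if u ≤ n then racciT r (n - u) else 0 := by
  rw [racciT]
  rw [Finset.sum_congr rfl (fun σ hσ => racci_pascal σ (by
    by_contra h
    have hsum : ∑ s : Fin r, σ s = 0 := Nat.eq_zero_of_not_pos h
    have h0 : ∀ s : Fin r, σ s = 0 := by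
      intro s
      have := Finset.single_le_sum (f := σ) (fun s _ => Nat.zero_le _) (Finset.mem_univ s)
      omega
    have hw := racciW_mem.mp hσ
    rw [Finset.sum_congr rfl (fun s _ => by rw [h0 s, mul_zero])] at hw
    simp at hw; omega))]
  rw [Finset.sum_comm]
  have h2 : ∀ t : Fin r,
      (∑ σ ∈ racciW r n, if σ t = 0 then 0 else
        Nat.multinomial Finset.univ (Function.update σ t (σ t - 1)))
      = if (t : ℕ) + 1 ≤ n then racciT r (n - ((t : ℕ) + 1)) else 0 := by
    intro t
    rw [← racci_inner r n t, Finset.sum_filter]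
    exact Finset.sum_congr rfl fun σ _ => by
      by_cases h : σ t = 0 <;> simp [h]
  rw [Finset.sum_congr rfl (fun t _ => h2 t)]
  rw [Fin.sum_univ_eq_sum_range (fun i => if i + 1 ≤ n then racciT r (n - (i + 1)) else 0) r]
  rw [show Finset.Icc 1 r = Finset.Ico 1 (r + 1) by rw [Finset.Ico_add_one_right_eq_Icc]]
  rw [Finset.sum_Ico_eq_sum_range]
  simp only [Nat.add_sub_cancel]
  exact Finset.sum_congr rfl fun i _ => by rw [Nat.add_comm 1 i]

lemma racci_final (r' n : ℕ) :
    racciT (r' + 1) n = ∑ v ∈ Finset.univ.filter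
        (fun v : Fin r' → Fin (n + 1) =>
          ∑ j : Fin r', ((j : ℕ) + 2) * (v j : ℕ) ≤ n),
      ((n - ∑ j : Fin r', ((j : ℕ) + 1) * (v j : ℕ)).factorial /
          ((∏ j : Fin r', ((v j : ℕ)).factorial) *
            (n - ∑ j : Fin r', ((j : ℕ) + 2) * (v j : ℕ)).factorial)) := by
  rw [racciT]
  have hsplit : ∀ σ : Fin (r' + 1) → ℕ,
      ∑ t : Fin (r' + 1), ((t : ℕ) + 1) * σ t =
        σ 0 + ∑ j : Fin r', ((j : ℕ) + 2) * σ j.succ := by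
    intro σ
    rw [Fin.sum_univ_succ]
    simp only [Fin.val_zero, Fin.val_succ, zero_add, one_mul]

  refine Finset.sum_bij'
    (fun σ hσ => fun j : Fin r' => (⟨σ j.succ, ?_⟩ : Fin (n + 1)))
    (fun v _ => Fin.cons (n - ∑ j : Fin r', ((j : ℕ) + 2) * (v j : ℕ))
      (fun j => (v j : ℕ)))
    ?_ ?_ ?_ ?_ ?_
  · -- bound: σ j.succ < n + 1
    have hw := racciW_mem.mp hσ
    have h1 : σ j.succ ≤ ((j.succ : ℕ) + 1) * σ j.succ :=
      Nat.le_mul_of_pos_left _ (Nat.succ_pos _)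
    have h2 : ((j.succ : ℕ) + 1) * σ j.succ ≤ n := hw ▸
      Finset.single_le_sum (f := fun s : Fin (r' + 1) => ((s : ℕ) + 1) * σ s)
        (fun s _ => Nat.zero_le _) (Finset.mem_univ j.succ)
    omega
  · -- forward membership
    intro σ hσ
    have hw := racciW_mem.mp hσ
    rw [hsplit σ] at hw
    simp only [Finset.mem_filter, Finset.mem_univ, true_and]
    omega
  · -- backward membership
    intro v hv
    rw [Finset.mem_filter] at hv
    rw [racciW_mem, hsplit]
    simp only [Fin.cons_zero, Fin.cons_succ]
    omega
  · -- left inverse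
    intro σ hσ
    have hw := racciW_mem.mp hσ
    rw [hsplit σ] at hw
    funext s
    refine Fin.cases ?_ (fun j => ?_) s
    · simp only [Fin.cons_zero]
      omega
    · simp [Fin.cons_succ]
  · -- right inverse
    intro v hv
    funext j
    apply Fin.val_injective
    simp [Fin.cons_succ]
  · -- values agree
    intro σ hσ
    have hw := racciW_mem.mp hσ
    rw [hsplit σ] at hw
    show Nat.multinomial Finset.univ σ =
      (n - ∑ j : Fin r', ((j : ℕ) + 1) * σ j.succ)! /
        ((∏ j : Fin r', (σ j.succ)!) * (n - ∑ j : Fin r', ((j : ℕ) + 2) * σ j.succ)!)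
    have h2 : (∑ j : Fin r', ((j : ℕ) + 1) * σ j.succ) + ∑ j : Fin r', σ j.succ
        = ∑ j : Fin r', ((j : ℕ) + 2) * σ j.succ := by
      rw [← Finset.sum_add_distrib]
      exact Finset.sum_congr rfl fun j _ => by ring
    have hA : ∑ s : Fin (r' + 1), σ s = n - ∑ j : Fin r', ((j : ℕ) + 1) * σ j.succ := by
      rw [Fin.sum_univ_succ]
      omega
    have hB : ∏ s : Fin (r' + 1), (σ s)! =
        (∏ j : Fin r', (σ j.succ)!) * (n - ∑ j : Fin r', ((j : ℕ) + 2) * σ j.succ)! := by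
      rw [Fin.prod_univ_succ, Nat.mul_comm]
      congr 2
      omega
    rw [Nat.multinomial, hA, hB]

lemma racci_F_eq_T (r : ℕ) (F : ℤ → ℤ) (hF0 : F 0 = 1)
    (hFneg : ∀ i : ℤ, i < 0 → F i = 0)
    (hrec : ∀ m : ℤ, 1 ≤ m → F m = ∑ t ∈ Finset.Icc 1 r, F (m - (t : ℤ)))
    (n : ℕ) : F n = racciT r n := by
  induction n using Nat.strong_induction_on with
  | _ n ih =>
    rcases Nat.eq_zero_or_pos n with hn | hn
    · subst hn
      simpa [racciT_zero] using hF0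
    · have h1 : (1 : ℤ) ≤ (n : ℤ) := by exact_mod_cast hn
      rw [hrec n h1, racciT_rec r n hn]
      rw [Nat.cast_sum]
      refine Finset.sum_congr rfl fun t ht => ?_
      rw [Finset.mem_Icc] at ht
      by_cases htn : t ≤ n
      · rw [if_pos htn]
        have hc : (n : ℤ) - (t : ℤ) = ((n - t : ℕ) : ℤ) := by
          push_cast [htn]; ring
        rw [hc]
        exact ih (n - t) (by omega)
      · rw [if_neg htn]
        rw [hFneg ((n : ℤ) - (t : ℤ)) (by omega)]
        simp

/-- **Multinomial formula for the `r`-acci numbers (Corollary 5 of Sury).**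
Let `F` satisfy `F_0 = 1`, `F_i = 0` for `i < 0`, and
`F_n = F_{n-1} + ⋯ + F_{n-r}` for `n ≥ 1`. Then `F_n` equals the sum, over all tuples of
non-negative integers `(i_2, …, i_r)` with `2i_2 + 3i_3 + ⋯ + r·i_r ≤ n`, of the multinomial
coefficient `(n - i_2 - 2i_3 - ⋯ - (r-1)i_r)! / (i_2! ⋯ i_r! · (n - 2i_2 - ⋯ - r·i_r)!)`.
Here the tuple `(i_2, …, i_r)` is encoded as `v : Fin (r-1) → Fin (n+1)` with
`i_{j+2} = v j` (any `i_t` satisfying the constraint is at most `n`). -/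
theorem racci_eq_multinomial_sum (r : ℕ) (hr : 1 ≤ r) (F : ℤ → ℤ) (hF0 : F 0 = 1)
    (hFneg : ∀ i : ℤ, i < 0 → F i = 0)
    (hrec : ∀ m : ℤ, 1 ≤ m → F m = ∑ t ∈ Finset.Icc 1 r, F (m - (t : ℤ)))
    (n : ℕ) :
    F n = ∑ v ∈ Finset.univ.filter
        (fun v : Fin (r - 1) → Fin (n + 1) =>
          ∑ j : Fin (r - 1), ((j : ℕ) + 2) * (v j : ℕ) ≤ n),
      (((n - ∑ j : Fin (r - 1), ((j : ℕ) + 1) * (v j : ℕ)).factorial /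
          ((∏ j : Fin (r - 1), ((v j : ℕ)).factorial) *
            (n - ∑ j : Fin (r - 1), ((j : ℕ) + 2) * (v j : ℕ)).factorial) : ℕ) : ℤ) := by
  obtain ⟨r', rfl⟩ : ∃ r', r = r' + 1 := ⟨r - 1, (Nat.succ_pred_eq_of_pos hr).symm⟩
  rw [racci_F_eq_T (r' + 1) F hF0 hFneg hrec n, racci_final r' n, Nat.cast_sum]
  rfl
end

section
/- Let n ≥ 3 and let a, b be elements of a commutative ring (or indeterminates). Let S be the n×n matrix with all diagonal entries equal to a+b; entries S_{i,i+1} = a for 2 ≤ i ≤ n-1 and S_{1,2} = (-1)^{n+1} a; entries S_{i+1,i} = b for 2 ≤ i ≤ n-1 and S_{2,1} = (-1)^{n+1} b; corner entries S_{1,n} = b and S_{n,1} = a; and all other entries 0. Then det(S) = 2(a^n + b^n). -/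
open Matrix Finset

section aux
variable {R : Type*} [CommRing R]

/-- signed cyclic shift matrix -/
private def MM (m : ℕ) (e : R) : Matrix (Fin (m+3)) (Fin (m+3)) R :=
  Matrix.of fun i j =>
    if (j : ℕ) = (i : ℕ) + 1 then (if (i : ℕ) = 0 then e else 1)
    else if (i : ℕ) = m + 2 ∧ (j : ℕ) = 0 then 1 else 0

/-- its inverse -/
private def NN (m : ℕ) (e : R) : Matrix (Fin (m+3)) (Fin (m+3)) R :=
  Matrix.of fun i j =>
    if (i : ℕ) = (j : ℕ) + 1 then (if (j : ℕ) = 0 then e else 1)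
    else if (i : ℕ) = 0 ∧ (j : ℕ) = m + 2 then 1 else 0

private lemma NM_eq_one (m : ℕ) (e : R) (he : e * e = 1) :
    NN m e * MM m e = 1 := by
  ext i j
  rw [Matrix.mul_apply, Matrix.one_apply]
  have hi := i.isLt
  have hj := j.isLt
  by_cases h0 : (i : ℕ) = 0
  · rw [Finset.sum_eq_single (⟨m + 2, by omega⟩ : Fin (m + 3))]
    · simp only [NN, MM, Matrix.of_apply, Fin.ext_iff, Fin.val_zero]
      split_ifs <;> first | exact he | ring1 | omega | (exfalso; (try simp only [true_and, and_true, false_and, and_false, not_true, not_false_iff] at *) <;> omega)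
    · intro k _ hk
      have hk' : (k : ℕ) ≠ m + 2 := fun h => hk (Fin.ext h)
      have h1 : ¬ ((i : ℕ) = (k : ℕ) + 1) := by omega
      have h2 : ¬ ((i : ℕ) = 0 ∧ (k : ℕ) = m + 2) := fun h => hk' h.2
      simp only [NN, Matrix.of_apply, if_neg h1, if_neg h2, zero_mul]
    · intro h; exact absurd (Finset.mem_univ _) h
  · rw [Finset.sum_eq_single (⟨(i : ℕ) - 1, by omega⟩ : Fin (m + 3))]
    · simp only [NN, MM, Matrix.of_apply, Fin.ext_iff, Fin.val_zero]
      split_ifs <;> first | exact he | ring1 | omega | (exfalso; (try simp only [true_and, and_true, false_and, and_false, not_true, not_false_iff] at *) <;> omega)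
    · intro k _ hk
      have hk' : (k : ℕ) ≠ (i : ℕ) - 1 := fun h => hk (Fin.ext h)
      have h1 : ¬ ((i : ℕ) = (k : ℕ) + 1) := by omega
      have h2 : ¬ ((i : ℕ) = 0 ∧ (k : ℕ) = m + 2) := fun h => h0 h.1
      simp only [NN, Matrix.of_apply, if_neg h1, if_neg h2, zero_mul]
    · intro h; exact absurd (Finset.mem_univ _) h

private lemma det_one_add_M (m : ℕ) (e : R) :
    Matrix.det (1 + MM m e) = 1 + (-1) ^ (m + 2) * e := by
  rw [det_succ_column_zero]
  rw [Finset.sum_eq_add_of_mem (0 : Fin (m + 3)) (⟨m + 2, by omega⟩ : Fin (m + 3))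
      (Finset.mem_univ _) (Finset.mem_univ _) (by simp [Fin.ext_iff])
      (fun c _ hc => by
        have h1 : (c : ℕ) ≠ 0 := fun h => hc.1 (Fin.ext h)
        have h2 : (c : ℕ) ≠ m + 2 := fun h => hc.2 (Fin.ext h)
        have h3 : (1 + MM m e) c 0 = 0 := by
          simp only [MM, Matrix.add_apply, Matrix.one_apply, Matrix.of_apply, Fin.ext_iff,
            Fin.val_zero]
          split_ifs <;> first | ring1 | (exfalso; (try simp only [true_and, and_true, false_and, and_false, not_true, not_false_iff] at *) <;> omega)
        rw [h3, mul_zero, zero_mul])]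
  have hminor0 : Matrix.det ((1 + MM m e).submatrix (Fin.succAbove 0) Fin.succ) = 1 := by
    rw [Matrix.det_of_upperTriangular]
    · apply Finset.prod_eq_one
      intro k _
      simp only [Matrix.submatrix_apply, Fin.zero_succAbove, Matrix.add_apply, Matrix.one_apply,
        MM, Matrix.of_apply, Fin.ext_iff, Fin.val_succ]
      split_ifs <;> first | ring1 | (exfalso; (try simp only [true_and, and_true, false_and, and_false, not_true, not_false_iff] at *) <;> omega)
    · intro p q hpq
      have h : (q : ℕ) < (p : ℕ) := hpq
      simp only [Matrix.submatrix_apply, Fin.zero_succAbove, Matrix.add_apply, Matrix.one_apply,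
        MM, Matrix.of_apply, Fin.ext_iff, Fin.val_succ]
      split_ifs <;> first | ring1 | (exfalso; (try simp only [true_and, and_true, false_and, and_false, not_true, not_false_iff] at *) <;> omega)
  have hlast : (⟨m + 2, by omega⟩ : Fin (m + 3)) = Fin.last (m + 2) := rfl
  have hminor1 : Matrix.det ((1 + MM m e).submatrix
      (Fin.succAbove (⟨m + 2, by omega⟩ : Fin (m + 3))) Fin.succ) = e := by
    rw [hlast, Fin.succAbove_last]
    rw [Matrix.det_of_lowerTriangular]
    · rw [show (∏ k : Fin (m + 2), ((1 + MM m e).submatrix Fin.castSucc Fin.succ) k k) =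
          ∏ k : Fin (m + 2), (if (k : ℕ) = 0 then e else 1) from ?_]
      · exact Finset.prod_eq_single (0 : Fin (m + 2)) (fun k _ hk => by
            rw [if_neg (show ¬((k : ℕ) = 0) from fun h => hk (Fin.ext (h.trans (Fin.val_zero _).symm)))]) (fun h => absurd (Finset.mem_univ _) h)
      · apply Finset.prod_congr rfl
        intro k _
        have hk := k.isLt
        simp only [Matrix.submatrix_apply, Matrix.add_apply, Matrix.one_apply, MM,
          Matrix.of_apply, Fin.ext_iff, Fin.val_succ, Fin.coe_castSucc]
        split_ifs <;> first | ring1 | (exfalso; (try simp only [true_and, and_true, false_and, and_false, not_true, not_false_iff] at *) <;> omega)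
    · intro p q hpq
      have h : (p : ℕ) < (q : ℕ) := hpq
      have hp := p.isLt
      simp only [Matrix.submatrix_apply, Matrix.add_apply, Matrix.one_apply, MM,
        Matrix.of_apply, Fin.ext_iff, Fin.val_succ, Fin.coe_castSucc]
      split_ifs <;> first | ring1 | (exfalso; (try simp only [true_and, and_true, false_and, and_false, not_true, not_false_iff] at *) <;> omega)
  rw [hminor0, hminor1]
  have e00 : (1 + MM m e) 0 0 = 1 := by
    simp only [MM, Matrix.add_apply, Matrix.one_apply, Matrix.of_apply, Fin.ext_iff, Fin.val_zero]
    split_ifs <;> first | ring1 | (exfalso; (try simp only [true_and, and_true, false_and, and_false, not_true, not_false_iff] at *) <;> omega)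
  have elast : (1 + MM m e) (⟨m + 2, by omega⟩ : Fin (m + 3)) 0 = 1 := by
    simp only [MM, Matrix.add_apply, Matrix.one_apply, Matrix.of_apply, Fin.ext_iff, Fin.val_zero]
    split_ifs <;> first | ring1 | (exfalso; (try simp only [true_and, and_true, false_and, and_false, not_true, not_false_iff] at *) <;> omega)
  rw [e00, elast]
  simp [Fin.val_zero]

private lemma det_a_add_bN (m : ℕ) (e : R) (a b : R) :
    Matrix.det (a • (1 : Matrix (Fin (m+3)) (Fin (m+3)) R) + b • NN m e)
      = a ^ (m + 3) + (-1) ^ (m + 2) * e * b ^ (m + 3) := by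
  set A := a • (1 : Matrix (Fin (m+3)) (Fin (m+3)) R) + b • NN m e with hA
  have entry : ∀ i j : Fin (m + 3), A i j =
      (if (i : ℕ) = (j : ℕ) then a else 0) +
      (if (i : ℕ) = (j : ℕ) + 1 then (if (j : ℕ) = 0 then b * e else b)
       else if (i : ℕ) = 0 ∧ (j : ℕ) = m + 2 then b else 0) := by
    intro i j
    simp only [hA, NN, Matrix.add_apply, Matrix.smul_apply, Matrix.one_apply, Matrix.of_apply,
      smul_eq_mul, Fin.ext_iff]
    split_ifs <;> ring
  rw [det_succ_row_zero]
  rw [Finset.sum_eq_add_of_mem (0 : Fin (m + 3)) (⟨m + 2, by omega⟩ : Fin (m + 3))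
      (Finset.mem_univ _) (Finset.mem_univ _) (by simp [Fin.ext_iff])
      (fun c _ hc => by
        have h1 : (c : ℕ) ≠ 0 := fun h => hc.1 (Fin.ext h)
        have h2 : (c : ℕ) ≠ m + 2 := fun h => hc.2 (Fin.ext h)
        have h3 : A 0 c = 0 := by
          rw [entry]
          simp only [Fin.val_zero]
          simp [h1, h2, Ne.symm h1]
        rw [h3, mul_zero, zero_mul])]
  have hminor0 : Matrix.det (A.submatrix Fin.succ (Fin.succAbove 0)) = a ^ (m + 2) := by
    rw [Matrix.det_of_lowerTriangular]
    · rw [show (∏ k : Fin (m + 2), (A.submatrix Fin.succ (Fin.succAbove 0)) k k) =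
          ∏ _k : Fin (m + 2), a from ?_]
      · simp [Finset.prod_const]
      · apply Finset.prod_congr rfl
        intro k _
        simp only [Matrix.submatrix_apply, Fin.zero_succAbove, entry, Fin.val_succ]
        split_ifs <;> first | ring1 | (exfalso; (try simp only [true_and, and_true, false_and, and_false, not_true, not_false_iff] at *) <;> omega)
    · intro p q hpq
      have h : (p : ℕ) < (q : ℕ) := hpq
      simp only [Matrix.submatrix_apply, Fin.zero_succAbove, entry, Fin.val_succ]
      split_ifs <;> first | ring1 | (exfalso; (try simp only [true_and, and_true, false_and, and_false, not_true, not_false_iff] at *) <;> omega)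
  have hlast : (⟨m + 2, by omega⟩ : Fin (m + 3)) = Fin.last (m + 2) := rfl
  have hminor1 : Matrix.det (A.submatrix Fin.succ
      (Fin.succAbove (⟨m + 2, by omega⟩ : Fin (m + 3)))) = e * b ^ (m + 2) := by
    rw [hlast, Fin.succAbove_last]
    rw [Matrix.det_of_upperTriangular]
    · rw [show (∏ k : Fin (m + 2), (A.submatrix Fin.succ Fin.castSucc) k k) =
          ∏ k : Fin (m + 2), (b * if (k : ℕ) = 0 then e else 1) from ?_]
      · rw [Finset.prod_mul_distrib, Finset.prod_const]
        rw [Finset.prod_eq_single (0 : Fin (m + 2)) (fun k _ hk => by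
            rw [if_neg (show ¬((k : ℕ) = 0) from fun h => hk (Fin.ext (h.trans (Fin.val_zero _).symm)))]) (fun h => absurd (Finset.mem_univ _) h)]
        simp [mul_comm]
      · apply Finset.prod_congr rfl
        intro k _
        have hk := k.isLt
        simp only [Matrix.submatrix_apply, entry, Fin.val_succ, Fin.coe_castSucc]
        split_ifs <;> first | ring1 | (exfalso; (try simp only [true_and, and_true, false_and, and_false, not_true, not_false_iff] at *) <;> omega)
    · intro p q hpq
      have h : (q : ℕ) < (p : ℕ) := hpq
      have hq := q.isLt
      simp only [Matrix.submatrix_apply, entry, Fin.val_succ, Fin.coe_castSucc]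
      split_ifs <;> first | ring1 | (exfalso; (try simp only [true_and, and_true, false_and, and_false, not_true, not_false_iff] at *) <;> omega)
  rw [hminor0, hminor1]
  have e00 : A 0 0 = a := by
    rw [entry]; simp
  have elast : A 0 (⟨m + 2, by omega⟩ : Fin (m + 3)) = b := by
    rw [entry]
    simp only [Fin.val_zero]
    split_ifs <;> first | ring1 | (exfalso; (try simp only [true_and, and_true, false_and, and_false, not_true, not_false_iff] at *) <;> omega)
  rw [e00, elast]
  simp only [Fin.val_zero, pow_zero, one_mul]
  ring

end aux

/-- **A new determinantal identity.**
For `n ≥ 3` and elements `a, b` of a commutative ring, the `n × n` matrix `S` with diagonal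
entries `a + b`, superdiagonal entries `a` except `S_{1,2} = (-1)^{n+1} a`, subdiagonal
entries `b` except `S_{2,1} = (-1)^{n+1} b`, corner entries `S_{1,n} = b` and `S_{n,1} = a`,
and `0` elsewhere, satisfies `det S = 2(a^n + b^n)`. -/
theorem det_circulant_like_eq (R : Type*) [CommRing R] (n : ℕ) (hn : 3 ≤ n) (a b : R) :
    Matrix.det (fun i j : Fin n =>
      if (i : ℕ) = (j : ℕ) then a + b
      else if (i : ℕ) = 0 ∧ (j : ℕ) = n - 1 then b
      else if (i : ℕ) = n - 1 ∧ (j : ℕ) = 0 then a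
      else if (j : ℕ) = (i : ℕ) + 1 then
        (if (i : ℕ) = 0 then (-1 : R) ^ (n + 1) * a else a)
      else if (i : ℕ) = (j : ℕ) + 1 then
        (if (j : ℕ) = 0 then (-1 : R) ^ (n + 1) * b else b)
      else 0) = 2 * (a ^ n + b ^ n) := by
  obtain ⟨m, rfl⟩ : ∃ m, n = m + 3 := ⟨n - 3, by omega⟩
  set e : R := (-1) ^ (m + 3 + 1) with he_def
  have hee : e * e = 1 := by
    rw [he_def, ← pow_add]
    have : (m + 3 + 1) + (m + 3 + 1) = 2 * (m + 4) := by ring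
    rw [this, pow_mul]
    norm_num
  have key : (a • (1 : Matrix (Fin (m+3)) (Fin (m+3)) R) + b • NN m e) * (1 + MM m e)
      = (a + b) • (1 : Matrix (Fin (m+3)) (Fin (m+3)) R) + a • MM m e + b • NN m e := by
    rw [Matrix.add_mul, Matrix.smul_mul, Matrix.smul_mul, Matrix.mul_add, Matrix.mul_add,
      NM_eq_one m e hee]
    simp only [Matrix.one_mul, Matrix.mul_one]
    module
  have hfact : ((a + b) • (1 : Matrix (Fin (m+3)) (Fin (m+3)) R) + a • MM m e + b • NN m e)
      = (fun i j : Fin (m + 3) =>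
      if (i : ℕ) = (j : ℕ) then a + b
      else if (i : ℕ) = 0 ∧ (j : ℕ) = m + 3 - 1 then b
      else if (i : ℕ) = m + 3 - 1 ∧ (j : ℕ) = 0 then a
      else if (j : ℕ) = (i : ℕ) + 1 then
        (if (i : ℕ) = 0 then (-1 : R) ^ (m + 3 + 1) * a else a)
      else if (i : ℕ) = (j : ℕ) + 1 then
        (if (j : ℕ) = 0 then (-1 : R) ^ (m + 3 + 1) * b else b)
      else 0) := by
    funext i j
    have hi := i.isLt
    have hj := j.isLt
    simp only [Matrix.add_apply, Matrix.smul_apply, Matrix.one_apply, MM, NN, Matrix.of_apply,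
      smul_eq_mul, Fin.ext_iff, he_def]
    have h31 : m + 3 - 1 = m + 2 := by omega
    rw [h31]
    split_ifs <;> first | ring1 | (exfalso; (try simp only [true_and, and_true, false_and, and_false, not_true, not_false_iff] at *) <;> omega)
  rw [← hfact, ← key, Matrix.det_mul, det_a_add_bN, det_one_add_M, he_def]
  have h1 : (-1 : R) ^ (m + 2) * (-1) ^ (m + 3 + 1) = 1 := by
    rw [← pow_add]
    have : (m + 2) + (m + 3 + 1) = 2 * (m + 3) := by ring
    rw [this, pow_mul]
    norm_num
  rw [show (-1 : R) ^ (m + 2) * (-1) ^ (m + 3 + 1) * b ^ (m + 3)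
      = b ^ (m + 3) from by rw [h1, one_mul]]
  rw [show (1 : R) + (-1) ^ (m + 2) * (-1) ^ (m + 3 + 1) = 2 from by rw [h1]; norm_num]
  ring
end

section
/- Let (ℓ_n) be the Lucas numbers, defined by ℓ_n = ℓ_{n-1} + ℓ_{n-2} for n ≥ 3 with ℓ_1 = 1, ℓ_2 = 3 (and ℓ_0 = 2). For n ≥ 3, let A be the n×n real matrix with all diagonal entries equal to 1; entries A_{i,i+1} = (1+√5)/2 for 2 ≤ i ≤ n-1 and A_{1,2} = (-1)^{n+1}(1+√5)/2; entries A_{i+1,i} = (1-√5)/2 for 2 ≤ i ≤ n-1 and A_{2,1} = (-1)^{n+1}(1-√5)/2; corner entries A_{1,n} = (1-√5)/2 and A_{n,1} = (1+√5)/2; and all other entries 0. Then ℓ_n = (1/2)·det(A). -/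
open Matrix

noncomputable def Smat (k : ℕ) (ε : ℝ) : Matrix (Fin (k+1)) (Fin (k+1)) ℝ :=
  Matrix.diagonal (fun i : Fin (k+1) => if (i:ℕ) = 0 then ε else 1) * ((finRotate (k+1)).toPEquiv.toMatrix)

lemma Smat_apply (k : ℕ) (ε : ℝ) (i j : Fin (k+1)) :
    Smat k ε i j =
      if (if (i:ℕ) = k then 0 else (i:ℕ)+1) = (j:ℕ) then (if (i:ℕ) = 0 then ε else 1)
      else 0 := by
  rw [Smat, Matrix.diagonal_mul, PEquiv.toMatrix_toPEquiv_eq, Matrix.submatrix_apply, Matrix.one_apply]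
  rw [mul_ite, mul_one, mul_zero]
  congr 1
  rw [Fin.ext_iff, coe_finRotate]
  simp [Fin.ext_iff]

lemma Smat_orth (k : ℕ) (ε : ℝ) (hε : ε * ε = 1) :
    (Smat k ε)ᵀ * Smat k ε = 1 := by
  set d : Fin (k+1) → ℝ := fun i : Fin (k+1) => if (i:ℕ) = 0 then ε else 1 with hd
  have hdd : Matrix.diagonal d * Matrix.diagonal d = 1 := by
    rw [Matrix.diagonal_mul_diagonal]
    have : (fun i => d i * d i) = fun _ : Fin (k+1) => (1:ℝ) := by
      funext i
      by_cases h : (i:ℕ) = 0 <;> simp [hd, h, hε, ← Fin.val_eq_zero_iff]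
    rw [this, Matrix.diagonal_one]
  have hPP : ((finRotate (k+1)).toPEquiv.toMatrix : Matrix _ _ ℝ)ᵀ *
      (finRotate (k+1)).toPEquiv.toMatrix = 1 := by
    rw [← PEquiv.toMatrix_symm, ← Equiv.toPEquiv_symm, ← PEquiv.toMatrix_trans,
      ← Equiv.toPEquiv_trans]
    simp
  rw [Smat, Matrix.transpose_mul, Matrix.diagonal_transpose, Matrix.mul_assoc,
    ← Matrix.mul_assoc (Matrix.diagonal d), hdd, Matrix.one_mul, hPP]
lemma Smat_det (k : ℕ) (hk : 1 ≤ k) (ε c : ℝ) :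
    (c • (1 : Matrix (Fin (k+1)) (Fin (k+1)) ℝ) + Smat k ε).det
      = c^(k+1) + (-1)^k * ε := by
  set M : Matrix (Fin (k+1)) (Fin (k+1)) ℝ := c • 1 + Smat k ε with hMdef
  have hM : ∀ i j : Fin (k+1), M i j =
      (if (i:ℕ) = (j:ℕ) then c else 0) +
      (if (if (i:ℕ) = k then 0 else (i:ℕ)+1) = (j:ℕ) then (if (i:ℕ) = 0 then ε else 1)
       else 0) := by
    intro i j
    rw [hMdef, Matrix.add_apply, Matrix.smul_apply, Matrix.one_apply, Smat_apply]
    congr 1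
    by_cases h : i = j <;> simp [h, Fin.ext_iff] <;> simp [Fin.ext_iff] at h <;> simp [h]
  rw [Matrix.det_succ_column_zero]
  set f : Fin (k+1) → ℝ := fun i =>
    (-1)^(i:ℕ) * M i 0 * (M.submatrix i.succAbove Fin.succ).det with hf
  have hne : (0 : Fin (k+1)) ≠ Fin.last k := by
    simp [Fin.ext_iff]; omega
  have hzero : ∀ x : Fin (k+1), x ∉ ({0, Fin.last k} : Finset (Fin (k+1))) → f x = 0 := by
    intro x hx
    simp only [Finset.mem_insert, Finset.mem_singleton] at hx
    push_neg at hx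
    obtain ⟨hx0, hxl⟩ := hx
    have h0 : (x:ℕ) ≠ 0 := by
      intro h; exact hx0 (by rw [Fin.ext_iff, h]; simp)
    have hl : (x:ℕ) ≠ k := by
      intro h; exact hxl (by rw [Fin.ext_iff, h, Fin.val_last])
    clear hx0 hxl hne
    have : M x 0 = 0 := by
      rw [hM]
      rw [Fin.val_zero]
      split_ifs <;> first | ring1 | omega | (exfalso; first | assumption | omega)
    simp [hf, this]
  have hsum : ∑ i : Fin (k+1), f i = f 0 + f (Fin.last k) := by
    rw [← Finset.sum_subset (Finset.subset_univ ({0, Fin.last k} : Finset (Fin (k+1))))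
      (fun x _ hx => hzero x hx)]
    exact Finset.sum_pair hne
  rw [hsum]
  have hM00 : M 0 0 = c := by
    have hne' : ¬ ((0:ℕ) = k) := by omega
    rw [hM]
    rw [Fin.val_zero]
    split_ifs <;> first | ring1 | omega | (exfalso; first | assumption | omega)
  have hMl0 : M (Fin.last k) 0 = 1 := by
    have hk' : ¬ (k = 0) := by omega
    rw [hM]
    rw [Fin.val_zero, Fin.val_last]
    split_ifs <;> first | ring1 | omega | (exfalso; first | assumption | omega)
  have hminor0 : (M.submatrix (Fin.succAbove 0) Fin.succ).det = c ^ k := by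
    rw [Fin.succAbove_zero]
    rw [Matrix.det_of_upperTriangular]
    · have hdiag : ∀ i : Fin k, (M.submatrix Fin.succ Fin.succ) i i = c := by
        intro i
        rw [Matrix.submatrix_apply, hM]
        simp only [Fin.val_succ]
        split_ifs <;> first | ring1 | omega | (exfalso; first | assumption | omega)
      rw [Finset.prod_congr rfl (fun i _ => hdiag i)]
      simp
    · intro i j hij
      have hji : (j:ℕ) < (i:ℕ) := hij
      clear hij
      rw [Matrix.submatrix_apply, hM]
      simp only [Fin.val_succ]
      split_ifs <;> first | ring1 | omega | (exfalso; first | assumption | omega)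
  have hminorl : (M.submatrix (Fin.succAbove (Fin.last k)) Fin.succ).det = ε := by
    rw [Fin.succAbove_last]
    rw [Matrix.det_of_lowerTriangular]
    · haveI : NeZero k := ⟨by omega⟩
      have hdiag : ∀ i : Fin k, (M.submatrix Fin.castSucc Fin.succ) i i =
          (if i = (0 : Fin k) then ε else 1) := by
        intro i
        rw [Matrix.submatrix_apply, hM]
        simp only [Fin.val_succ, Fin.coe_castSucc]
        have hik : (i:ℕ) < k := i.isLt
        have hcond : (i = (0 : Fin k)) ↔ ((i:ℕ) = 0) := by exact Fin.ext_iff.trans (by rw [Fin.val_zero])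
        rw [if_congr hcond.symm rfl rfl]
        split_ifs <;> first | ring1 | omega | (exfalso; first | assumption | omega)
      rw [Finset.prod_congr rfl (fun i _ => hdiag i), Finset.prod_ite_eq']
      simp
    · intro i j hij
      have hij' : (i:ℕ) < (j:ℕ) := hij
      clear hij
      rw [Matrix.submatrix_apply, hM]
      simp only [Fin.val_succ, Fin.coe_castSucc]
      have hik : (i:ℕ) < k := i.isLt
      split_ifs <;> first | ring1 | omega | (exfalso; first | assumption | omega)
  rw [hf]
  simp only [Fin.val_zero, pow_zero, one_mul, hM00, hMl0, hminor0, hminorl, Fin.val_last,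
    mul_one]
  ring
set_option maxHeartbeats 1000000 in

/-- **Determinantal formula for the Lucas numbers.**
Let `ℓ` satisfy `ℓ_0 = 2`, `ℓ_1 = 1`, `ℓ_2 = 3`, and `ℓ_n = ℓ_{n-1} + ℓ_{n-2}` for `n ≥ 3`.
For `n ≥ 3`, let `A` be the `n × n` real matrix with diagonal entries `1`, superdiagonal
entries `(1+√5)/2` except `A_{1,2} = (-1)^{n+1}(1+√5)/2`, subdiagonal entries `(1-√5)/2`
except `A_{2,1} = (-1)^{n+1}(1-√5)/2`, corner entries `A_{1,n} = (1-√5)/2` and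
`A_{n,1} = (1+√5)/2`, and `0` elsewhere. Then `ℓ_n = (1/2) det A`. -/
theorem lucas_eq_half_det (l : ℕ → ℝ) (hl0 : l 0 = 2) (hl1 : l 1 = 1) (hl2 : l 2 = 3)
    (hrec : ∀ n, 3 ≤ n → l n = l (n - 1) + l (n - 2))
    (n : ℕ) (hn : 3 ≤ n) :
    l n = (1 / 2) * Matrix.det (fun i j : Fin n =>
      if (i : ℕ) = (j : ℕ) then 1
      else if (i : ℕ) = 0 ∧ (j : ℕ) = n - 1 then (1 - Real.sqrt 5) / 2
      else if (i : ℕ) = n - 1 ∧ (j : ℕ) = 0 then (1 + Real.sqrt 5) / 2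
      else if (j : ℕ) = (i : ℕ) + 1 then
        (if (i : ℕ) = 0 then (-1 : ℝ) ^ (n + 1) * ((1 + Real.sqrt 5) / 2)
         else (1 + Real.sqrt 5) / 2)
      else if (i : ℕ) = (j : ℕ) + 1 then
        (if (j : ℕ) = 0 then (-1 : ℝ) ^ (n + 1) * ((1 - Real.sqrt 5) / 2)
         else (1 - Real.sqrt 5) / 2)
      else 0) := by
  have h5 : Real.sqrt 5 * Real.sqrt 5 = 5 := Real.mul_self_sqrt (by norm_num)
  set s := Real.sqrt 5 with hs
  set φ : ℝ := (1 + s) / 2 with hφ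
  set ψ : ℝ := (1 - s) / 2 with hψ
  have hφψ : φ * ψ = -1 := by rw [hφ, hψ]; linear_combination (-(1:ℝ)/4) * h5
  have hφ2 : φ * φ = φ + 1 := by rw [hφ]; linear_combination ((1:ℝ)/4) * h5
  have hψ2 : ψ * ψ = ψ + 1 := by rw [hψ]; linear_combination ((1:ℝ)/4) * h5
  -- closed form for l
  have hlcf : ∀ m : ℕ, l m = φ ^ m + ψ ^ m := by
    intro m
    induction m using Nat.strong_induction_on with
    | _ m ih =>
      match m with
      | 0 => rw [hl0]; norm_num
      | 1 => rw [hl1, pow_one, pow_one, hφ, hψ]; ring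
      | 2 => rw [hl2, hφ, hψ]; linear_combination (-(1:ℝ)/2) * h5
      | (m+3) =>
        rw [hrec (m+3) (by omega)]
        have e1 : m + 3 - 1 = m + 2 := rfl
        have e2 : m + 3 - 2 = m + 1 := rfl
        rw [e1, e2, ih (m+2) (by omega), ih (m+1) (by omega)]
        linear_combination (-(φ^(m+1))) * hφ2 + (-(ψ^(m+1))) * hψ2
  obtain ⟨k, rfl⟩ : ∃ k, n = k + 1 := ⟨n - 1, by omega⟩
  have hk : 2 ≤ k := by omega
  set ε : ℝ := (-1 : ℝ) ^ (k + 1 + 1) with hε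
  have hε2 : ε * ε = 1 := by
    rw [hε, ← pow_add]
    exact Even.neg_one_pow ⟨k + 2, by ring⟩
  have hεk : (-1 : ℝ) ^ k * ε = 1 := by
    rw [hε, ← pow_add]
    exact Even.neg_one_pow ⟨k + 1, by ring⟩
  set S : Matrix (Fin (k+1)) (Fin (k+1)) ℝ := Smat k ε with hS
  have hSTS : Sᵀ * S = 1 := Smat_orth k ε hε2
  -- the matrix in the statement equals 1 + φ•S + ψ•Sᵀ
  have hA : (fun i j : Fin (k+1) =>
      if (i : ℕ) = (j : ℕ) then 1
      else if (i : ℕ) = 0 ∧ (j : ℕ) = k + 1 - 1 then ψ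
      else if (i : ℕ) = k + 1 - 1 ∧ (j : ℕ) = 0 then φ
      else if (j : ℕ) = (i : ℕ) + 1 then (if (i : ℕ) = 0 then ε * φ else φ)
      else if (i : ℕ) = (j : ℕ) + 1 then (if (j : ℕ) = 0 then ε * ψ else ψ)
      else 0) = (1 + φ • S + ψ • Sᵀ : Matrix (Fin (k+1)) (Fin (k+1)) ℝ) := by
    funext i j
    have hi := i.isLt
    have hj := j.isLt
    simp only [Matrix.add_apply, Matrix.smul_apply, Matrix.one_apply,
      Matrix.transpose_apply, smul_eq_mul, hS, Smat_apply]
    rw [show ((if i = j then (1:ℝ) else 0) = if (i:ℕ) = (j:ℕ) then (1:ℝ) else 0) from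
      if_congr Fin.ext_iff rfl rfl]
    have e1 : k + 1 - 1 = k := rfl
    rw [e1]
    split_ifs <;> first | ring1 | omega | (exfalso; first | assumption | omega)
  rw [hA]
  set A : Matrix (Fin (k+1)) (Fin (k+1)) ℝ := 1 + φ • S + ψ • Sᵀ with hAdef
  -- key factorization
  have key : A * S = φ • ((S + (-(ψ*ψ)) • 1) * (S + 1)) := by
    have h1 : φ * (1 - ψ * ψ) = 1 := by
      rw [hφ, hψ]; linear_combination ((1 - s)/8) * h5
    have h2 : φ * (-(ψ * ψ)) = ψ := by
      linear_combination (-ψ) * hφψ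
    have expand : φ • ((S + (-(ψ*ψ)) • 1) * (S + 1)) =
        (φ * (1 - ψ * ψ)) • S + φ • (S * S) + (φ * (-(ψ * ψ))) • (1 : Matrix (Fin (k+1)) (Fin (k+1)) ℝ) := by
      simp only [mul_add, add_mul, Matrix.smul_mul, Matrix.mul_smul, mul_one,
        Matrix.mul_one, Matrix.one_mul, smul_add, smul_smul, sub_smul, one_smul]
      module
    rw [expand, h1, h2, one_smul, hAdef, add_mul, add_mul, one_mul,
      Matrix.smul_mul, Matrix.smul_mul, hSTS]
  -- determinants
  have hdetS : S.det = 1 := by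
    have := Smat_det k (by omega) ε 0
    simp only [zero_smul, zero_add] at this
    rw [hS, this, zero_pow (by omega), zero_add, hεk]
  have hdetS1 : (S + 1).det = 2 := by
    have h := Smat_det k (by omega) ε 1
    rw [one_smul] at h
    rw [hS, show Smat k ε + 1 = 1 + Smat k ε from add_comm _ _, h, one_pow, hεk]
    norm_num
  have hdetS2 : (S + (-(ψ*ψ)) • 1).det = (-(ψ*ψ))^(k+1) + 1 := by
    have h := Smat_det k (by omega) ε (-(ψ*ψ))
    rw [hS, show Smat k ε + (-(ψ*ψ)) • 1 = (-(ψ*ψ)) • 1 + Smat k ε from add_comm _ _, h, hεk]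
  have hdet := congrArg Matrix.det key
  rw [Matrix.det_mul, Matrix.det_smul, Matrix.det_mul, hdetS, hdetS1, hdetS2, mul_one,
    Fintype.card_fin] at hdet
  -- conclude
  rw [hlcf, hdet]
  have hψn : φ ^ (k+1) * (-(ψ*ψ)) ^ (k+1) = ψ ^ (k+1) := by
    rw [← mul_pow]
    congr 1
    linear_combination (-ψ) * hφψ
  linear_combination (-1 : ℝ) * hψn
end
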